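/- arXiv:math/0404112 — 8 statements merged into one kernel-verified Lean document; each statement's English description precedes it below -/
import Mathlib

section
/- For every point (x,y) ∈ [0,1)², every λ = (λ₁,…,λ₅) ∈ ℝ₊⁵ and every δ > 0, there exists Q₀ (depending on x, y, λ, δ) such that for all integers Q ≥ Q₀ one has R^{(6)}_{(x,y),Q}(λ) > Q^{1/4−δ}. Consequently R^{(6)}_{(x,y),Q}(λ) → ∞ as Q → ∞. -/
open MeasureTheory Real

/-- The point of `ℝ²` (as `EuclideanSpace ℝ (Fin 2)`) associated to a pair of reals. -/
noncomputable def toPt (x y : ℝ) : EuclideanSpace ℝ (Fin 2) :=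
  (WithLp.equiv 2 (Fin 2 → ℝ)).symm ![x, y]

/-- The (undirected) angle `∠ P P_{(x,y)} P'` at the vertex `(x,y)` between the lattice
points `P` and `P'`. -/
noncomputable def angleAt (x y : ℝ) (P P' : ℤ × ℤ) : ℝ :=
  EuclideanGeometry.angle (toPt P.1 P.2) (toPt x y) (toPt P'.1 P'.2)

/-- `Box Q = ℤ² ∩ [-Q,Q]²`. -/
def Box (Q : ℕ) : Set (ℤ × ℤ) := {p | |p.1| ≤ (Q : ℤ) ∧ |p.2| ≤ (Q : ℤ)}

/-- The 6-level correlation repartition `R^{(6)}_{(x,y),Q}(λ)`. -/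
noncomputable def R6pt (x y : ℝ) (Q : ℕ) (lam : Fin 5 → ℝ) : ℝ :=
  (({P : Fin 6 → ℤ × ℤ | (∀ i, P i ∈ Box Q) ∧ Function.Injective P ∧
      ∀ i : Fin 5, |angleAt x y (P i.castSucc) (P i.succ)| ≤
        2 * π * lam i / (2 * (Q : ℝ) + 1) ^ 2}).ncard : ℝ) / (2 * (Q : ℝ) + 1) ^ 2

lemma esp_inner (A B : EuclideanSpace ℝ (Fin 2)) : (inner ℝ A B : ℝ) = A 0 * B 0 + A 1 * B 1 := by
  simp [PiLp.inner_apply, Fin.sum_univ_two, RCLike.inner_apply]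
  ring

lemma esp_norm_sq (A : EuclideanSpace ℝ (Fin 2)) : ‖A‖ ^ 2 = A 0 ^ 2 + A 1 ^ 2 := by
  rw [EuclideanSpace.norm_eq, Real.sq_sqrt (by positivity)]
  simp [Fin.sum_univ_two, sq_abs]

lemma angle_le_of_cross_small (A B : EuclideanSpace ℝ (Fin 2)) {c : ℝ}
    (hA : 0 < ‖A‖) (hB : 0 < ‖B‖) (hc : 0 ≤ c)
    (hinner : 0 ≤ A 0 * B 0 + A 1 * B 1)
    (hcross : π * |A 0 * B 1 - A 1 * B 0| ≤ c * (‖A‖ * ‖B‖)) :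
    InnerProductGeometry.angle A B ≤ c := by
  have hθ0 : 0 ≤ InnerProductGeometry.angle A B := InnerProductGeometry.angle_nonneg A B
  have hθπ : InnerProductGeometry.angle A B ≤ π := InnerProductGeometry.angle_le_pi A B
  set θ : ℝ := InnerProductGeometry.angle A B with hθdef
  set nA : ℝ := ‖A‖ with hnA
  set nB : ℝ := ‖B‖ with hnB
  have hDpos : 0 < nA * nB := mul_pos hA hB
  set D : ℝ := nA * nB with hD
  set ip : ℝ := A 0 * B 0 + A 1 * B 1 with hip
  set cr : ℝ := A 0 * B 1 - A 1 * B 0 with hcr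
  have hcos : Real.cos θ * D = ip := by
    rw [hθdef, InnerProductGeometry.cos_angle, esp_inner]
    field_simp
    exact mul_div_cancel_right₀ _ hDpos.ne'
  have hlag : D ^ 2 = ip ^ 2 + cr ^ 2 := by
    have h1 := esp_norm_sq A
    have h2 := esp_norm_sq B
    rw [hD, mul_pow, hnA, hnB, h1, h2, hip, hcr]; ring
  have hiple : ip ≤ D := by
    rw [hip, ← esp_inner]; exact real_inner_le_norm A B
  clear_value θ nA nB D ip cr
  clear hθdef hnA hnB hD hip hcr
  have hπ := Real.pi_pos
  have hsin : θ / π ≤ Real.sin (θ / 2) := by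
    have := Real.mul_le_sin (x := θ / 2) (by linarith) (by linarith)
    calc θ / π = 2 / π * (θ / 2) := by field_simp
    _ ≤ Real.sin (θ / 2) := this
  have hsinsq : Real.sin (θ / 2) ^ 2 = 1 / 2 - Real.cos θ / 2 := by
    have := Real.sin_sq_eq_half_sub (θ / 2)
    rwa [show 2 * (θ / 2) = θ by ring] at this
  have hsin0 : 0 ≤ θ / π := by positivity
  have honecos : 2 * (θ / π) ^ 2 ≤ 1 - Real.cos θ := by
    nlinarith [mul_self_le_mul_self hsin0 hsin]
  have hkey : D * (D - ip) ≤ cr ^ 2 := by nlinarith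
  have h2 : 2 * (θ / π) ^ 2 * D ≤ D - ip := by
    have hmul := mul_le_mul_of_nonneg_right honecos hDpos.le
    have hrw : (1 - Real.cos θ) * D = D - ip := by rw [← hcos]; ring
    linarith
  have h3 : 2 * (θ / π) ^ 2 * D ^ 2 ≤ cr ^ 2 := by
    calc 2 * (θ / π) ^ 2 * D ^ 2 = (2 * (θ / π) ^ 2 * D) * D := by ring
    _ ≤ (D - ip) * D := mul_le_mul_of_nonneg_right h2 hDpos.le
    _ = D * (D - ip) := by ring
    _ ≤ cr ^ 2 := hkey
  have hc2 : π ^ 2 * cr ^ 2 ≤ c ^ 2 * D ^ 2 := by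
    have h := mul_self_le_mul_self (by positivity : (0:ℝ) ≤ π * |cr|) hcross
    calc π ^ 2 * cr ^ 2 = (π * |cr|) * (π * |cr|) := by rw [← sq_abs cr]; ring
    _ ≤ (c * D) * (c * D) := h
    _ = c ^ 2 * D ^ 2 := by ring
  have hθsq : (2 * θ ^ 2) * D ^ 2 ≤ c ^ 2 * D ^ 2 := by
    calc (2 * θ ^ 2) * D ^ 2 = π ^ 2 * (2 * (θ / π) ^ 2 * D ^ 2) := by
          field_simp
    _ ≤ π ^ 2 * cr ^ 2 := mul_le_mul_of_nonneg_left h3 (sq_nonneg π)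
    _ ≤ c ^ 2 * D ^ 2 := hc2
  have hD2 : (0:ℝ) < D ^ 2 := by positivity
  have h2θ : 2 * θ ^ 2 ≤ c ^ 2 := le_of_mul_le_mul_right hθsq hD2
  nlinarith [sq_nonneg (θ - c), sq_nonneg (θ + c)]

private lemma dirichlet_half (x y : ℝ) (hx0 : 0 ≤ x) (hx1 : x ≤ 1) (hy0 : 0 ≤ y)
    (hxy : y ≤ x) (n : ℕ) (hn : 0 < n) :
    ∃ j k : ℤ, 0 < k ∧ k ≤ (n : ℤ) ∧ |j| ≤ (n : ℤ) + 1 ∧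
      |(k : ℝ) * y - (j : ℝ) * x| ≤ 1 / ((n : ℝ) + 1) := by
  have hn1 : (0:ℝ) < (n : ℝ) + 1 := by positivity
  have hnR : (1:ℝ) ≤ (n : ℝ) := by exact_mod_cast hn
  set α : ℝ := y / x with hα
  have hα0 : 0 ≤ α := by
    rcases eq_or_lt_of_le hx0 with h | h
    · simp [hα, ← h]
    · exact div_nonneg hy0 hx0
  have hα1 : α ≤ 1 := by
    rcases eq_or_lt_of_le hx0 with h | h
    · simp [hα, ← h]
    · exact (div_le_one h).mpr hxy
  obtain ⟨j, k, hk0, hkn, hjk⟩ := Real.exists_int_int_abs_mul_sub_le α hn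
  have hkR : (k : ℝ) ≤ n := by exact_mod_cast hkn
  have hkR0 : (0:ℝ) < k := by exact_mod_cast hk0
  refine ⟨j, k, hk0, hkn, ?_, ?_⟩
  · have h1 : |(j : ℝ)| ≤ |(j : ℝ) - k * α| + |(k:ℝ) * α| := by
      have := abs_add_le ((j : ℝ) - k * α) ((k:ℝ) * α)
      simpa using this
    have h2 : |(j : ℝ) - k * α| = |(k:ℝ) * α - j| := abs_sub_comm _ _
    have h3 : |(k:ℝ) * α| ≤ (n : ℝ) := by
      rw [abs_of_nonneg (by positivity)]
      calc (k:ℝ) * α ≤ (k:ℝ) * 1 := mul_le_mul_of_nonneg_left hα1 hkR0.le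
      _ ≤ n := by simpa using hkR
    have h4 : 1 / ((n:ℝ) + 1) ≤ 1 := by
      rw [div_le_one hn1]; linarith
    have : |(j:ℝ)| ≤ (n : ℝ) + 1 := by linarith
    exact_mod_cast this
  · rcases eq_or_lt_of_le hx0 with h | h
    · have hy : y = 0 := le_antisymm (by linarith) hy0
      have hx' : x = 0 := h.symm
      rw [hy, hx']
      simp
      positivity
    · have hkey : (k : ℝ) * y - j * x = x * ((k:ℝ) * α - j) := by
        have hxa : x * α = y := by rw [hα]; field_simp [h.ne']
        linear_combination (-(k:ℝ)) * hxa
      rw [hkey, abs_mul, abs_of_pos h]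
      calc x * |(k:ℝ) * α - j| ≤ 1 * (1 / ((n:ℝ) + 1)) :=
            mul_le_mul hx1 hjk (abs_nonneg _) zero_le_one
      _ = 1 / ((n:ℝ) + 1) := one_mul _

lemma dirichlet_pair (x y : ℝ) (hx0 : 0 ≤ x) (hx1 : x ≤ 1) (hy0 : 0 ≤ y) (hy1 : y ≤ 1)
    (n : ℕ) (hn : 0 < n) :
    ∃ a b : ℤ, 1 ≤ max |a| |b| ∧ max |a| |b| ≤ (n : ℤ) + 1 ∧
      |(a : ℝ) * y - (b : ℝ) * x| ≤ 1 / ((n : ℝ) + 1) := by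
  rcases le_total y x with hxy | hxy
  · obtain ⟨j, k, hk0, hkn, hjn, hcr⟩ := dirichlet_half x y hx0 hx1 hy0 hxy n hn
    have hka : |k| = k := abs_of_pos hk0
    refine ⟨k, j, le_max_of_le_left (by omega), max_le (by omega) hjn, hcr⟩
  · obtain ⟨j, k, hk0, hkn, hjn, hcr⟩ := dirichlet_half y x hy0 hy1 hx0 hxy n hn
    have hka : |k| = k := abs_of_pos hk0
    exact ⟨j, k, le_max_of_le_right (by omega), max_le hjn (by omega),
      by rw [abs_sub_comm]; exact hcr⟩

lemma coord_norm_bound {A : EuclideanSpace ℝ (Fin 2)} {r : ℝ}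
    (h : r ≤ |A 0| ∨ r ≤ |A 1|) : r ≤ ‖A‖ := by
  have hn := esp_norm_sq A
  have h0 := norm_nonneg A
  rcases h with h | h
  · nlinarith [sq_abs (A 0), sq_nonneg (A 1), abs_nonneg (A 0), sq_nonneg (|A 0| - ‖A‖)]
  · nlinarith [sq_abs (A 1), sq_nonneg (A 0), abs_nonneg (A 1), sq_nonneg (|A 1| - ‖A‖)]


set_option maxHeartbeats 1000000 in
lemma construction (x y : ℝ) (hx0 : 0 ≤ x) (hx1 : x ≤ 1) (hy0 : 0 ≤ y) (hy1 : y ≤ 1)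
    (Q M n : ℕ) (ε : ℝ) (hn : 0 < n) (hQ : 16 ≤ (Q:ℝ))
    (hMn : (M:ℝ) * ((n:ℝ)+1) ≤ (Q:ℝ)/2)
    (hε0 : 0 ≤ ε)
    (hε : π * ((M:ℝ) / ((n:ℝ)+1)) ≤ ε * ((Q:ℝ)/4 * ((Q:ℝ)/4))) :
    ∃ f : Fin M → ℤ × ℤ, Function.Injective f ∧ (∀ t, f t ∈ Box Q) ∧
      ∀ t t' : Fin M, t ≠ t' → angleAt x y (f t) (f t') ≤ ε := by
  obtain ⟨a, b, hm1, hmn, hcr⟩ := dirichlet_pair x y hx0 hx1 hy0 hy1 n hn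
  set m : ℤ := max |a| |b| with hm
  have ham : |a| ≤ m := le_max_left _ _
  have hbm : |b| ≤ m := le_max_right _ _
  have hm0 : (0:ℤ) < m := hm1
  have hab : ¬(a = 0 ∧ b = 0) := by
    rintro ⟨rfl, rfl⟩; simp [hm] at hm1
  set t0 : ℤ := (Q : ℤ) / (2 * m) + 1 with ht0
  have h2m : (0:ℤ) < 2 * m := by omega
  have ht01 : 1 ≤ t0 := by
    have : 0 ≤ (Q:ℤ) / (2*m) := Int.ediv_nonneg (by positivity) (by omega)
    omega
  have hlow : (Q : ℤ) < (((Q:ℤ)/(2*m)) + 1) * (2 * m) := Int.lt_ediv_add_one_mul_self _ h2m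
  have hhighZ : ((Q:ℤ)/(2*m)) * (2*m) ≤ (Q:ℤ) := Int.ediv_mul_le _ (by omega)
  -- real versions
  have hmR1 : (1:ℝ) ≤ (m:ℝ) := by exact_mod_cast hm1
  have hmRn : (m:ℝ) ≤ (n:ℝ)+1 := by exact_mod_cast hmn
  have hQ2 : (8:ℝ) ≤ (Q:ℝ)/2 := by linarith
  have hlowR : (Q:ℝ) < (t0:ℝ) * (2*(m:ℝ)) := by
    have : (Q:ℤ) < t0 * (2*m) := by rw [ht0]; exact hlow
    exact_mod_cast this
  have hhighR : (t0:ℝ) * (2*(m:ℝ)) ≤ (Q:ℝ) + 2*(m:ℝ) := by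
    have : t0 * (2*m) ≤ (Q:ℤ) + 2*m := by
      rw [ht0, add_mul, one_mul]; omega
    exact_mod_cast this
  -- the family of points
  set F : Fin M → ℤ × ℤ := fun t => ((t0 + ((t:ℕ):ℤ)) * a, (t0 + ((t:ℕ):ℤ)) * b) with hF
  set TT : Fin M → ℝ := fun t => (t0:ℝ) + ((t:ℕ):ℝ) with hTT
  have hTpos : ∀ t : Fin M, 1 ≤ TT t := by
    intro t
    have : (0:ℝ) ≤ ((t:ℕ):ℝ) := Nat.cast_nonneg _
    have h1 : (1:ℝ) ≤ (t0:ℝ) := by exact_mod_cast ht01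
    simp only [hTT]; linarith
  have htM : ∀ t : Fin M, ((t:ℕ):ℝ) ≤ (M:ℝ) - 1 := by
    intro t
    have : ((t:ℕ):ℝ) + 1 ≤ (M:ℝ) := by exact_mod_cast t.isLt
    linarith
  have hTlow : ∀ t : Fin M, (Q:ℝ)/2 < TT t * (m:ℝ) := by
    intro t
    have h1 : (t0:ℝ) * (m:ℝ) > (Q:ℝ)/2 := by nlinarith
    have h2 : (0:ℝ) ≤ ((t:ℕ):ℝ) * (m:ℝ) := by positivity
    simp only [hTT]; nlinarith
  have hThigh : ∀ t : Fin M, TT t * (m:ℝ) ≤ (Q:ℝ) := by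
    intro t
    have h1 : (t0:ℝ) * (m:ℝ) ≤ (Q:ℝ)/2 + (m:ℝ) := by nlinarith
    have h2 : ((t:ℕ):ℝ) * (m:ℝ) ≤ ((M:ℝ) - 1) * (m:ℝ) := by
      apply mul_le_mul_of_nonneg_right (htM t) (by linarith)
    have h3 : (M:ℝ) * (m:ℝ) ≤ (M:ℝ) * ((n:ℝ)+1) := by
      apply mul_le_mul_of_nonneg_left hmRn (Nat.cast_nonneg _)
    simp only [hTT]; nlinarith
  refine ⟨F, ?_, ?_, ?_⟩
  · -- injective
    intro t t' h
    simp only [hF, Prod.mk.injEq] at h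
    obtain ⟨h1, h2⟩ := h
    have : t0 + ((t:ℕ):ℤ) = t0 + ((t':ℕ):ℤ) := by
      rcases (not_and_or.mp hab) with ha | hb
      · exact mul_right_cancel₀ ha h1
      · exact mul_right_cancel₀ hb h2
    have : (t:ℕ) = (t':ℕ) := by omega
    exact Fin.ext this
  · -- in box
    intro t
    have hZ : (t0 + ((t:ℕ):ℤ)) * m ≤ (Q:ℤ) := by
      have := hThigh t
      have h2 : ((t0 + ((t:ℕ):ℤ)) : ℝ) * (m:ℝ) ≤ (Q:ℝ) := by push_cast; push_cast [hTT] at this; linarith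
      exact_mod_cast h2
    have hTZ : 0 < t0 + ((t:ℕ):ℤ) := by omega
    constructor
    · show |(t0 + ((t:ℕ):ℤ)) * a| ≤ (Q:ℤ)
      rw [abs_mul, abs_of_pos hTZ]
      calc (t0 + ((t:ℕ):ℤ)) * |a| ≤ (t0 + ((t:ℕ):ℤ)) * m :=
            mul_le_mul_of_nonneg_left ham (by omega)
      _ ≤ (Q:ℤ) := hZ
    · show |(t0 + ((t:ℕ):ℤ)) * b| ≤ (Q:ℤ)
      rw [abs_mul, abs_of_pos hTZ]
      calc (t0 + ((t:ℕ):ℤ)) * |b| ≤ (t0 + ((t:ℕ):ℤ)) * m :=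
            mul_le_mul_of_nonneg_left hbm (by omega)
      _ ≤ (Q:ℤ) := hZ
  · -- angles
    intro t t' hne
    have hangle : angleAt x y (F t) (F t') =
        InnerProductGeometry.angle (toPt ((F t).1 : ℝ) ((F t).2 : ℝ) - toPt x y)
          (toPt ((F t').1 : ℝ) ((F t').2 : ℝ) - toPt x y) := rfl
    rw [hangle]
    set A : EuclideanSpace ℝ (Fin 2) := toPt ((F t).1 : ℝ) ((F t).2 : ℝ) - toPt x y with hA
    set B : EuclideanSpace ℝ (Fin 2) := toPt ((F t').1 : ℝ) ((F t').2 : ℝ) - toPt x y with hB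
    have hA0 : A 0 = TT t * (a:ℝ) - x := by
      show (((t0 + ((t:ℕ):ℤ)) * a : ℤ) : ℝ) - x = _
      push_cast [hTT]; ring
    have hA1 : A 1 = TT t * (b:ℝ) - y := by
      show (((t0 + ((t:ℕ):ℤ)) * b : ℤ) : ℝ) - y = _
      push_cast [hTT]; ring
    have hB0 : B 0 = TT t' * (a:ℝ) - x := by
      show (((t0 + ((t':ℕ):ℤ)) * a : ℤ) : ℝ) - x = _
      push_cast [hTT]; ring
    have hB1 : B 1 = TT t' * (b:ℝ) - y := by
      show (((t0 + ((t':ℕ):ℤ)) * b : ℤ) : ℝ) - y = _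
      push_cast [hTT]; ring
    clear_value A B TT F t0 m
    -- norm lower bounds
    have hnormlow : ∀ (C : EuclideanSpace ℝ (Fin 2)) (s : Fin M),
        C 0 = TT s * (a:ℝ) - x → C 1 = TT s * (b:ℝ) - y → (Q:ℝ)/4 ≤ ‖C‖ := by
      intro C s hC0 hC1
      have hTs := hTlow s
      have hTsp := hTpos s
      rcases max_choice |a| |b| with hc | hc
      · apply coord_norm_bound (Or.inl _)
        have hma : m = |a| := hm.trans hc
        have habs : |(a:ℝ)| = (m:ℝ) := by rw [hma, Int.cast_abs]
        have h1 : |TT s * (a:ℝ)| - |x| ≤ |TT s * (a:ℝ) - x| := abs_sub_abs_le_abs_sub _ _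
        have h2 : |TT s * (a:ℝ)| = TT s * (m:ℝ) := by
          rw [abs_mul, habs, abs_of_pos (by linarith)]
        rw [hC0]
        have hxabs : |x| ≤ 1 := abs_le.mpr ⟨by linarith, hx1⟩
        linarith
      · apply coord_norm_bound (Or.inr _)
        have hma : m = |b| := hm.trans hc
        have habs : |(b:ℝ)| = (m:ℝ) := by rw [hma, Int.cast_abs]
        have h1 : |TT s * (b:ℝ)| - |y| ≤ |TT s * (b:ℝ) - y| := abs_sub_abs_le_abs_sub _ _
        have h2 : |TT s * (b:ℝ)| = TT s * (m:ℝ) := by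
          rw [abs_mul, habs, abs_of_pos (by linarith)]
        rw [hC1]
        have hyabs : |y| ≤ 1 := abs_le.mpr ⟨by linarith, hy1⟩
        linarith
    have hnA : (Q:ℝ)/4 ≤ ‖A‖ := hnormlow A t hA0 hA1
    have hnB : (Q:ℝ)/4 ≤ ‖B‖ := hnormlow B t' hB0 hB1
    have hQ4 : (0:ℝ) < (Q:ℝ)/4 := by linarith
    apply angle_le_of_cross_small A B (by linarith) (by linarith) hε0
    · -- inner nonneg
      rw [hA0, hA1, hB0, hB1]
      have hmsq : (m:ℝ)^2 ≤ (a:ℝ)^2 + (b:ℝ)^2 := by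
        rcases max_choice |a| |b| with hc | hc
        · have hma : m = |a| := hm.trans hc
          have : (m:ℝ)^2 = (a:ℝ)^2 := by rw [hma, Int.cast_abs, sq_abs]
          nlinarith [sq_nonneg ((b:ℝ))]
        · have hma : m = |b| := hm.trans hc
          have : (m:ℝ)^2 = (b:ℝ)^2 := by rw [hma, Int.cast_abs, sq_abs]
          nlinarith [sq_nonneg ((a:ℝ))]
      have haam : |(a:ℝ)| ≤ (m:ℝ) := by exact_mod_cast ham
      have hbbm : |(b:ℝ)| ≤ (m:ℝ) := by exact_mod_cast hbm
      have habxy : (a:ℝ) * x + (b:ℝ) * y ≤ 2 * (m:ℝ) := by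
        have h1 : (a:ℝ) * x ≤ |(a:ℝ)| := by
          calc (a:ℝ) * x ≤ |(a:ℝ) * x| := le_abs_self _
          _ = |(a:ℝ)| * |x| := abs_mul _ _
          _ ≤ |(a:ℝ)| * 1 := by
                apply mul_le_mul_of_nonneg_left (abs_le.mpr ⟨by linarith, hx1⟩) (abs_nonneg _)
          _ = |(a:ℝ)| := mul_one _
        have h2 : (b:ℝ) * y ≤ |(b:ℝ)| := by
          calc (b:ℝ) * y ≤ |(b:ℝ) * y| := le_abs_self _
          _ = |(b:ℝ)| * |y| := abs_mul _ _
          _ ≤ |(b:ℝ)| * 1 := by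
                apply mul_le_mul_of_nonneg_left (abs_le.mpr ⟨by linarith, hy1⟩) (abs_nonneg _)
          _ = |(b:ℝ)| := mul_one _
        linarith
      have hu := hTlow t
      have hu' := hTlow t'
      have hup := hTpos t
      have hup' := hTpos t'
      have hprod : 0 ≤ (TT t * (m:ℝ) - 4) * (TT t' * (m:ℝ) - 4) :=
        mul_nonneg (by linarith) (by linarith)
      have hA' : 0 ≤ (TT t * (m:ℝ)) * (TT t' * (m:ℝ)) - 2*(TT t * (m:ℝ)) - 2*(TT t' * (m:ℝ)) := by
        nlinarith [hprod, hu, hu', hQ2]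
      have h5 : TT t * TT t' * ((m:ℝ)^2) ≤ TT t * TT t' * ((a:ℝ)^2 + (b:ℝ)^2) :=
        mul_le_mul_of_nonneg_left hmsq (by nlinarith)
      have h6 : (TT t + TT t') * ((a:ℝ) * x + (b:ℝ) * y) ≤ (TT t + TT t') * (2 * (m:ℝ)) :=
        mul_le_mul_of_nonneg_left habxy (by linarith)
      have hexp : (TT t * (a:ℝ) - x) * (TT t' * (a:ℝ) - x) + (TT t * (b:ℝ) - y) * (TT t' * (b:ℝ) - y)
          = TT t * TT t' * ((a:ℝ)^2 + (b:ℝ)^2) - (TT t + TT t') * ((a:ℝ)*x + (b:ℝ)*y) + (x^2 + y^2) := by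
        ring
      rw [hexp]
      linarith [h5, h6, hA', sq_nonneg x, sq_nonneg y]
    · -- cross bound
      rw [hA0, hA1, hB0, hB1]
      have hcross_eq : (TT t * (a:ℝ) - x) * (TT t' * (b:ℝ) - y)
          - (TT t * (b:ℝ) - y) * (TT t' * (a:ℝ) - x)
          = (TT t' - TT t) * ((a:ℝ) * y - (b:ℝ) * x) := by ring
      rw [hcross_eq, abs_mul]
      have hd1 : |TT t' - TT t| ≤ (M:ℝ) := by
        have h1 := htM t
        have h2 := htM t'
        have h3 : (0:ℝ) ≤ ((t:ℕ):ℝ) := Nat.cast_nonneg _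
        have h4 : (0:ℝ) ≤ ((t':ℕ):ℝ) := Nat.cast_nonneg _
        have hM1 : (1:ℝ) ≤ (M:ℝ) := by
          have : (t:ℕ) < M := t.isLt
          have : (1:ℕ) ≤ M := by omega
          exact_mod_cast this
        simp only [hTT]
        rw [abs_le]
        constructor <;> [linarith; linarith]
      have hπ := Real.pi_pos
      calc π * (|TT t' - TT t| * |(a:ℝ) * y - (b:ℝ) * x|)
          ≤ π * ((M:ℝ) * (1 / ((n:ℝ)+1))) := by
            apply mul_le_mul_of_nonneg_left _ hπ.le
            apply mul_le_mul hd1 hcr (abs_nonneg _) (Nat.cast_nonneg _)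
      _ = π * ((M:ℝ) / ((n:ℝ)+1)) := by ring
      _ ≤ ε * ((Q:ℝ)/4 * ((Q:ℝ)/4)) := hε
      _ ≤ ε * (‖A‖ * ‖B‖) := by
            apply mul_le_mul_of_nonneg_left _ hε0
            apply mul_le_mul hnA hnB (by linarith) (norm_nonneg _)

lemma box_finite (Q : ℕ) : (Box Q).Finite := by
  apply Set.Finite.subset (Set.finite_Icc ((-(Q:ℤ), -(Q:ℤ)) : ℤ × ℤ) ((Q:ℤ), (Q:ℤ)))
  rintro ⟨p1, p2⟩ ⟨h1, h2⟩
  rw [abs_le] at h1 h2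
  exact ⟨⟨h1.1, h2.1⟩, ⟨h1.2, h2.2⟩⟩

lemma angleAt_nonneg (x y : ℝ) (P P' : ℤ × ℤ) : 0 ≤ angleAt x y P P' :=
  EuclideanGeometry.angle_nonneg _ _ _

lemma count_lower (x y : ℝ) (Q M : ℕ) (ε : ℝ) (lam : Fin 5 → ℝ)
    (hεlam : ∀ i, ε ≤ 2 * π * lam i / (2 * (Q:ℝ) + 1) ^ 2)
    (f : Fin M → ℤ × ℤ) (hinj : Function.Injective f) (hbox : ∀ t, f t ∈ Box Q)
    (hang : ∀ t t', t ≠ t' → angleAt x y (f t) (f t') ≤ ε) :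
    (M.descFactorial 6 : ℝ) / (2 * (Q:ℝ) + 1) ^ 2 ≤ R6pt x y Q lam := by
  set S : Set (Fin 6 → ℤ × ℤ) := {P : Fin 6 → ℤ × ℤ | (∀ i, P i ∈ Box Q) ∧ Function.Injective P ∧
      ∀ i : Fin 5, |angleAt x y (P i.castSucc) (P i.succ)| ≤
        2 * π * lam i / (2 * (Q : ℝ) + 1) ^ 2} with hS
  have hSfin : S.Finite := by
    apply Set.Finite.subset (Set.Finite.pi (fun _ : Fin 6 => box_finite Q))
    intro P hP i _
    exact hP.1 i
  have hfin2 : ((2 * (Q:ℝ) + 1) ^ 2) > 0 := by positivity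
  have hcard : (M.descFactorial 6 : ℝ) ≤ (S.ncard : ℝ) := by
    have key : M.descFactorial 6 ≤ S.ncard := by
      set Φ : (Fin 6 ↪ Fin M) → (Fin 6 → ℤ × ℤ) := fun e => f ∘ e with hΦ
      have hΦinj : Function.Injective Φ := by
        intro e e' h
        apply DFunLike.ext
        intro i
        apply hinj
        exact congrFun h i
      have hΦrange : Set.range Φ ⊆ S := by
        rintro _ ⟨e, rfl⟩
        refine ⟨fun i => hbox _, hinj.comp e.injective, fun i => ?_⟩
        have hne : e i.castSucc ≠ e i.succ := by
          intro h
          exact absurd (e.injective h) (Fin.castSucc_lt_succ).ne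
        rw [abs_of_nonneg (angleAt_nonneg _ _ _ _)]
        exact (hang _ _ hne).trans (hεlam i)
      calc M.descFactorial 6 = Fintype.card (Fin 6 ↪ Fin M) := by
            rw [Fintype.card_embedding_eq, Fintype.card_fin, Fintype.card_fin]
      _ = Nat.card (Fin 6 ↪ Fin M) := (Nat.card_eq_fintype_card).symm
      _ = Nat.card (Set.range Φ) := (Nat.card_range_of_injective hΦinj).symm
      _ = (Set.range Φ).ncard := Nat.card_coe_set_eq _
      _ ≤ S.ncard := Set.ncard_le_ncard hΦrange hSfin
    exact_mod_cast key
  rw [R6pt, ← hS]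
  gcongr


lemma descFactorial_lower (M : ℕ) : (M - 5) ^ 6 ≤ M.descFactorial 6 := by
  have h : M.descFactorial 6 = (M - 5) * ((M - 4) * ((M - 3) * ((M - 2) * ((M - 1) * M)))) := by
    simp [Nat.descFactorial]
  rw [h]
  calc (M - 5) ^ 6 = (M-5) * ((M-5) * ((M-5) * ((M-5) * ((M-5) * (M-5))))) := by ring
  _ ≤ (M - 5) * ((M - 4) * ((M - 3) * ((M - 2) * ((M - 1) * M)))) := by
      gcongr <;> omega

lemma ev_rpow {a b : ℝ} (hab : a < b) (C : ℝ) {c : ℝ} (hc : 0 < c) :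
    ∀ᶠ z : ℝ in Filter.atTop, C * z ^ a ≤ c * z ^ b := by
  have h1 : Filter.Tendsto (fun z : ℝ => z ^ (b - a)) Filter.atTop Filter.atTop :=
    tendsto_rpow_atTop (by linarith)
  filter_upwards [Filter.eventually_ge_atTop (1:ℝ), h1.eventually_ge_atTop (C / c)] with z hz1 hz2
  have hz0 : (0:ℝ) < z := by linarith
  have hza : (0:ℝ) < z ^ a := Real.rpow_pos_of_pos hz0 a
  have hC : C ≤ c * z ^ (b - a) := by
    rw [div_le_iff₀ hc] at hz2
    linarith [hz2]
  calc C * z ^ a ≤ (c * z ^ (b - a)) * z ^ a := mul_le_mul_of_nonneg_right hC hza.le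
  _ = c * z ^ b := by rw [mul_assoc, ← Real.rpow_add hz0]; ring_nf


set_option maxHeartbeats 1000000 in
/-- For every `(x,y) ∈ [0,1)²`, every `λ ∈ ℝ₊⁵` and every `δ > 0`, for all `Q` large
enough one has `R^{(6)}_{(x,y),Q}(λ) > Q^{1/4-δ}`; consequently
`R^{(6)}_{(x,y),Q}(λ) → ∞` as `Q → ∞`. -/
theorem six_level_correlation_diverges (x y : ℝ)
    (hx : x ∈ Set.Ico (0 : ℝ) 1) (hy : y ∈ Set.Ico (0 : ℝ) 1)
    (lam : Fin 5 → ℝ) (hlam : ∀ i, 0 < lam i) (δ : ℝ) (hδ : 0 < δ) :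
    (∃ Q0 : ℕ, ∀ Q : ℕ, Q0 ≤ Q → ((Q : ℝ) ^ ((1 / 4 : ℝ) - δ) < R6pt x y Q lam)) ∧
    Filter.Tendsto (fun Q : ℕ => R6pt x y Q lam) Filter.atTop Filter.atTop := by
  obtain ⟨hx0, hx1⟩ := hx
  obtain ⟨hy0, hy1⟩ := hy
  set l0 : ℝ := Finset.univ.inf' Finset.univ_nonempty lam with hl0
  have hl0pos : 0 < l0 := by
    rw [hl0, Finset.lt_inf'_iff]
    exact fun i _ => hlam i
  have hl0le : ∀ i, l0 ≤ lam i := fun i => Finset.inf'_le _ (Finset.mem_univ i)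
  have hπ := Real.pi_pos
  -- main eventual statement
  have key : ∀ δ' : ℝ, 0 < δ' → ∀ᶠ Q : ℕ in Filter.atTop,
      (Q : ℝ) ^ ((1 / 4 : ℝ) - δ') < R6pt x y Q lam := by
    intro δ' hδ'
    -- eventual real conditions
    have A2 : ∀ᶠ z : ℝ in Filter.atTop,
        (z ^ ((3:ℝ)/8) + 7) * (z ^ ((9:ℝ)/16) + 2) ≤ z / 2 := by
      have e1 := ev_rpow (show (15:ℝ)/16 < 1 by norm_num) (1:ℝ) (show (0:ℝ) < 1/8 by norm_num)
      have e2 := ev_rpow (show (3:ℝ)/8 < 1 by norm_num) (2:ℝ) (show (0:ℝ) < 1/8 by norm_num)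
      have e3 := ev_rpow (show (9:ℝ)/16 < 1 by norm_num) (7:ℝ) (show (0:ℝ) < 1/8 by norm_num)
      filter_upwards [e1, e2, e3, Filter.eventually_ge_atTop (112:ℝ),
        Filter.eventually_ge_atTop (1:ℝ)] with z h1 h2 h3 h4 h5
      have hz0 : (0:ℝ) < z := by linarith
      have hid : z ^ ((3:ℝ)/8) * z ^ ((9:ℝ)/16) = z ^ ((15:ℝ)/16) := by
        rw [← Real.rpow_add hz0]; norm_num
      rw [Real.rpow_one] at h1 h2 h3
      nlinarith [h1, h2, h3, hid]
    have A3 : ∀ᶠ z : ℝ in Filter.atTop,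
        z ^ ((3:ℝ)/8) + 7 ≤ (l0 / 72) * z ^ ((9:ℝ)/16) := by
      have e5 := ev_rpow (show (3:ℝ)/8 < 9/16 by norm_num) (1:ℝ)
        (show (0:ℝ) < l0/144 by positivity)
      have e6 := ev_rpow (show (0:ℝ) < 9/16 by norm_num) (7:ℝ)
        (show (0:ℝ) < l0/144 by positivity)
      filter_upwards [e5, e6] with z h5 h6
      rw [Real.rpow_zero] at h6
      linarith
    have A5 : ∀ᶠ z : ℝ in Filter.atTop, (9:ℝ) < z ^ δ' :=
      (tendsto_rpow_atTop hδ').eventually_gt_atTop 9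
    filter_upwards [tendsto_natCast_atTop_atTop.eventually A2,
      tendsto_natCast_atTop_atTop.eventually A3,
      tendsto_natCast_atTop_atTop.eventually A5,
      tendsto_natCast_atTop_atTop.eventually (Filter.eventually_ge_atTop (16:ℝ))]
      with Q hA2 hA3 hA5 hQ16
    set z : ℝ := (Q : ℝ) with hzdef
    have hz0 : (0:ℝ) < z := by rw [hzdef]; linarith
    have hz1 : (1:ℝ) ≤ z := by linarith
    -- parameters
    set n : ℕ := ⌈z ^ ((9:ℝ)/16)⌉₊ with hndef
    set M : ℕ := ⌈z ^ ((3:ℝ)/8)⌉₊ + 6 with hMdef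
    have hpow916 : (0:ℝ) < z ^ ((9:ℝ)/16) := Real.rpow_pos_of_pos hz0 _
    have hpow38 : (0:ℝ) < z ^ ((3:ℝ)/8) := Real.rpow_pos_of_pos hz0 _
    have hn0 : 0 < n := by rw [hndef]; exact Nat.ceil_pos.mpr hpow916
    have hnlow : z ^ ((9:ℝ)/16) ≤ (n:ℝ) := by rw [hndef]; exact Nat.le_ceil _
    have hnhigh : (n:ℝ) + 1 ≤ z ^ ((9:ℝ)/16) + 2 := by
      rw [hndef]
      have := Nat.ceil_lt_add_one hpow916.le
      linarith
    have hMhigh : (M:ℝ) ≤ z ^ ((3:ℝ)/8) + 7 := by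
      rw [hMdef]
      have := Nat.ceil_lt_add_one hpow38.le
      push_cast
      linarith
    have hMn : (M:ℝ) * ((n:ℝ)+1) ≤ z / 2 := by
      calc (M:ℝ) * ((n:ℝ)+1) ≤ (z ^ ((3:ℝ)/8) + 7) * (z ^ ((9:ℝ)/16) + 2) := by
            apply mul_le_mul hMhigh hnhigh (by positivity) (by positivity)
      _ ≤ z / 2 := hA2
    -- epsilon
    set ε : ℝ := 2 * π * l0 / (2 * z + 1) ^ 2 with hεdef
    have hε0 : 0 ≤ ε := by rw [hεdef]; positivity
    have hεlam : ∀ i, ε ≤ 2 * π * lam i / (2 * z + 1) ^ 2 := by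
      intro i
      rw [hεdef]
      apply div_le_div_of_nonneg_right ?_ (by positivity)
      nlinarith [hl0le i]
    have hε : π * ((M:ℝ) / ((n:ℝ)+1)) ≤ ε * (z/4 * (z/4)) := by
      have hstep1 : (M:ℝ) / ((n:ℝ)+1) ≤ (z ^ ((3:ℝ)/8) + 7) / (z ^ ((9:ℝ)/16)) := by
        apply div_le_div₀ (by positivity) hMhigh hpow916
        linarith
      have hstep2 : (z ^ ((3:ℝ)/8) + 7) / (z ^ ((9:ℝ)/16)) ≤ l0 / 72 := by
        rw [div_le_iff₀ hpow916]
        calc z ^ ((3:ℝ)/8) + 7 ≤ (l0 / 72) * z ^ ((9:ℝ)/16) := hA3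
        _ = l0 / 72 * z ^ ((9:ℝ)/16) := by ring
      have hstep3 : π * ((M:ℝ) / ((n:ℝ)+1)) ≤ π * (l0 / 72) :=
        mul_le_mul_of_nonneg_left (hstep1.trans hstep2) hπ.le
      have h9 : (2*z+1)^2 ≤ 9 * z^2 := by nlinarith
      have hw : (0:ℝ) < (2*z+1)^2 := by positivity
      have hstep4 : π * (l0 / 72) ≤ ε * (z/4 * (z/4)) := by
        rw [hεdef]
        have hrw : 2 * π * l0 / (2*z+1)^2 * (z/4 * (z/4)) = (π * l0) * (z^2 / (8 * (2*z+1)^2)) := by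
          field_simp
          ring
        rw [hrw]
        have hfrac : (1:ℝ)/72 ≤ z^2 / (8 * (2*z+1)^2) := by
          rw [div_le_div_iff₀ (by norm_num) (by positivity)]
          nlinarith
        calc π * (l0/72) = (π * l0) * (1/72) := by ring
        _ ≤ (π * l0) * (z^2 / (8 * (2*z+1)^2)) := by
              apply mul_le_mul_of_nonneg_left hfrac (by positivity)
      exact hstep3.trans hstep4
    -- construction
    obtain ⟨f, hfinj, hfbox, hfang⟩ := construction x y hx0 (le_of_lt hx1) hy0 (le_of_lt hy1)
      Q M n ε hn0 hQ16 hMn hε0 hε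
    have hcount := count_lower x y Q M ε lam hεlam f hfinj hfbox hfang
    -- final chain
    have hM5 : (M - 5 : ℕ) = ⌈z ^ ((3:ℝ)/8)⌉₊ + 1 := by rw [hMdef]; omega
    have hM5low : z ^ ((3:ℝ)/8) ≤ ((M - 5 : ℕ) : ℝ) := by
      rw [hM5]
      push_cast
      linarith [Nat.le_ceil (z ^ ((3:ℝ)/8))]
    have hdesc : (z ^ ((3:ℝ)/8)) ^ (6:ℕ) ≤ (M.descFactorial 6 : ℝ) := by
      calc (z ^ ((3:ℝ)/8)) ^ (6:ℕ) ≤ (((M - 5 : ℕ) : ℝ)) ^ (6:ℕ) :=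
            pow_le_pow_left₀ hpow38.le hM5low 6
      _ = (((M - 5 : ℕ) ^ 6 : ℕ) : ℝ) := by push_cast; ring
      _ ≤ (M.descFactorial 6 : ℝ) := by exact_mod_cast descFactorial_lower M
    have hzz : (z ^ ((3:ℝ)/8)) ^ (6:ℕ) = z ^ ((9:ℝ)/4) := by
      rw [← Real.rpow_natCast (z ^ ((3:ℝ)/8)) 6, ← Real.rpow_mul hz0.le]
      norm_num
    have h9 : (2*z+1)^2 ≤ 9 * z^2 := by nlinarith
    have hchain1 : z ^ ((9:ℝ)/4) / (9 * z^2) ≤ (M.descFactorial 6 : ℝ) / (2*z+1)^2 := by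
      calc z ^ ((9:ℝ)/4) / (9 * z^2) ≤ z ^ ((9:ℝ)/4) / (2*z+1)^2 := by
            apply div_le_div_of_nonneg_left (by positivity) (by positivity) h9
      _ ≤ (M.descFactorial 6 : ℝ) / (2*z+1)^2 := by
            rw [← hzz]
            apply div_le_div_of_nonneg_right hdesc (by positivity)
    have hid2 : z ^ ((9:ℝ)/4) / (9 * z^2) = z ^ ((1:ℝ)/4) / 9 := by
      have : z ^ ((9:ℝ)/4) = z ^ ((1:ℝ)/4) * z ^ (2:ℕ) := by
        rw [← Real.rpow_natCast z 2, ← Real.rpow_add hz0]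
        norm_num
      rw [this]
      have hz2 : (z:ℝ) ^ (2:ℕ) ≠ 0 := by positivity
      field_simp
    have hfinal : z ^ ((1:ℝ)/4 - δ') < z ^ ((1:ℝ)/4) / 9 := by
      rw [Real.rpow_sub hz0]
      exact div_lt_div_of_pos_left (Real.rpow_pos_of_pos hz0 _) (by norm_num) hA5
    calc (Q:ℝ) ^ ((1/4 : ℝ) - δ') = z ^ ((1:ℝ)/4 - δ') := by rw [hzdef]
    _ < z ^ ((1:ℝ)/4) / 9 := hfinal
    _ = z ^ ((9:ℝ)/4) / (9 * z^2) := hid2.symm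
    _ ≤ (M.descFactorial 6 : ℝ) / (2*z+1)^2 := hchain1
    _ ≤ R6pt x y Q lam := hcount
  constructor
  · have h := key δ hδ
    rw [Filter.eventually_atTop] at h
    obtain ⟨Q0, hQ0⟩ := h
    exact ⟨Q0, hQ0⟩
  · have h := key (1/8) (by norm_num)
    have htend : Filter.Tendsto (fun Q : ℕ => ((Q:ℝ)) ^ ((1/4 : ℝ) - 1/8)) Filter.atTop Filter.atTop :=
      (tendsto_rpow_atTop (by norm_num)).comp tendsto_natCast_atTop_atTop
    apply Filter.tendsto_atTop_mono' _ _ htend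
    filter_upwards [h] with Q hQ
    exact hQ.le
end

section
/- For every α₀, β₀ ∈ ℝ one has ∫_{pr₂𝒟} ψ(x) dx = ∬_{𝒟} √(Φ(t,x)) dt dx = 2π/3. -/
open MeasureTheory Real

/-- `Φ_{α₀,β₀}(t,x) = 1 + t² - (β₀ - tα₀ + x)²`. -/
def Phi (α0 β0 t x : ℝ) : ℝ := 1 + t ^ 2 - (β0 - t * α0 + x) ^ 2

/-- The domain `𝒟_{α₀,β₀} = {(t,x) : 0 ≤ t ≤ 1, Φ(t,x) ≥ 0}`. -/
def Dom (α0 β0 : ℝ) : Set (ℝ × ℝ) :=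
  {p | 0 ≤ p.1 ∧ p.1 ≤ 1 ∧ 0 ≤ Phi α0 β0 p.1 p.2}

/-- The projection `pr₂𝒟` of `𝒟` on the second coordinate. -/
def pr2Dom (α0 β0 : ℝ) : Set ℝ := Prod.snd '' Dom α0 β0

/-- The `x`-section `I_x = {t ∈ [0,1] : Φ(t,x) ≥ 0}`. -/
def Isec (α0 β0 x : ℝ) : Set ℝ := {t | t ∈ Set.Icc (0 : ℝ) 1 ∧ 0 ≤ Phi α0 β0 t x}

/-- `ψ(x) = ∫_{I_x} √(Φ(t,x)) dt`. -/
noncomputable def psi (α0 β0 x : ℝ) : ℝ :=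
  ∫ t in Isec α0 β0 x, Real.sqrt (Phi α0 β0 t x)

lemma int_sqrt_circle (r : ℝ) (hr : 0 < r) :
    ∫ x in (-r)..r, Real.sqrt (r ^ 2 - x ^ 2) = π * r ^ 2 / 2 := by
  have h0 : (∫ u in (-1 : ℝ)..1, Real.sqrt (r ^ 2 - (r * u) ^ 2))
      = r⁻¹ • ∫ x in (r * (-1))..(r * 1), Real.sqrt (r ^ 2 - x ^ 2) :=
    intervalIntegral.integral_comp_mul_left (fun x => Real.sqrt (r ^ 2 - x ^ 2)) hr.ne'
  have h1 : ∀ u : ℝ, Real.sqrt (r ^ 2 - (r * u) ^ 2) = r * Real.sqrt (1 - u ^ 2) := by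
    intro u
    rw [show r ^ 2 - (r * u) ^ 2 = r ^ 2 * (1 - u ^ 2) by ring, Real.sqrt_mul (sq_nonneg r),
      Real.sqrt_sq hr.le]
  simp only [h1] at h0
  rw [intervalIntegral.integral_const_mul, integral_sqrt_one_sub_sq] at h0
  have : r * (-1) = -r := by ring
  rw [this, mul_one] at h0
  rw [smul_eq_mul] at h0
  field_simp at h0 ⊢
  nlinarith [h0]

lemma phi_cont (α0 β0 : ℝ) : Continuous fun p : ℝ × ℝ => Phi α0 β0 p.1 p.2 := by
  unfold Phi; fun_prop

lemma dom_closed (α0 β0 : ℝ) : IsClosed (Dom α0 β0) := by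
  have : Dom α0 β0 = (fun p : ℝ × ℝ => p.1) ⁻¹' Set.Icc 0 1 ∩
      {p : ℝ × ℝ | 0 ≤ Phi α0 β0 p.1 p.2} := by
    ext p; simp [Dom, Set.mem_Icc, and_assoc]
  rw [this]
  exact ((isClosed_Icc).preimage continuous_fst).inter
    (isClosed_le continuous_const (phi_cont α0 β0))

lemma dom_compact (α0 β0 : ℝ) : IsCompact (Dom α0 β0) := by
  have hsub : Dom α0 β0 ⊆ Set.Icc (0, -(2 + |β0| + |α0|)) (1, 2 + |β0| + |α0|) := by
    rintro ⟨t, x⟩ ⟨ht0, ht1, hΦ⟩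
    simp only [Phi] at hΦ
    have ht2 : t ^ 2 ≤ 1 := by nlinarith
    have hy : (β0 - t * α0 + x) ^ 2 ≤ 4 := by nlinarith
    have h1 : β0 - t * α0 + x ≤ 2 := by nlinarith [sq_nonneg (β0 - t * α0 + x - 2)]
    have h2 : -2 ≤ β0 - t * α0 + x := by nlinarith [sq_nonneg (β0 - t * α0 + x + 2)]
    have hta : |t * α0| ≤ |α0| := by
      rw [abs_mul]
      calc |t| * |α0| ≤ 1 * |α0| := by
            apply mul_le_mul_of_nonneg_right _ (abs_nonneg _)
            rw [abs_of_nonneg ht0]; exact ht1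
        _ = |α0| := one_mul _
    have hb1 := le_abs_self β0
    have hb2 := neg_abs_le β0
    have hc1 := le_abs_self (t * α0)
    have hc2 := neg_abs_le (t * α0)
    constructor
    · exact ⟨ht0, by dsimp; nlinarith⟩
    · exact ⟨ht1, by dsimp; nlinarith⟩
  exact (isCompact_Icc).of_isClosed_subset (dom_closed α0 β0) hsub

lemma F_integrable (α0 β0 : ℝ) :
    Integrable ((Dom α0 β0).indicator fun p : ℝ × ℝ => Real.sqrt (Phi α0 β0 p.1 p.2)) := by
  rw [integrable_indicator_iff (dom_closed α0 β0).measurableSet]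
  exact (((phi_cont α0 β0).sqrt).continuousOn).integrableOn_compact (dom_compact α0 β0)

lemma inner_eq (α0 β0 t : ℝ) :
    (∫ x, (Dom α0 β0).indicator (fun p : ℝ × ℝ => Real.sqrt (Phi α0 β0 p.1 p.2)) (t, x))
      = (Set.Icc (0:ℝ) 1).indicator (fun t => π * (1 + t ^ 2) / 2) t := by
  by_cases ht : t ∈ Set.Icc (0:ℝ) 1
  · obtain ⟨ht0, ht1⟩ := ht
    set c := β0 - t * α0 with hc
    set r := Real.sqrt (1 + t ^ 2) with hrdef
    have hr : 0 < r := Real.sqrt_pos.2 (by positivity)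
    have hr2 : r ^ 2 = 1 + t ^ 2 := Real.sq_sqrt (by positivity)
    have hset : ∀ x : ℝ, ((t, x) ∈ Dom α0 β0) ↔ x ∈ Set.Icc (-c - r) (-c + r) := by
      intro x
      simp only [Dom, Set.mem_setOf_eq, Set.mem_Icc]
      constructor
      · rintro ⟨-, -, hΦ⟩
        simp only [Phi] at hΦ
        rw [← hc] at hΦ
        have h : (c + x) ^ 2 ≤ r ^ 2 := by nlinarith
        obtain ⟨hl, hu⟩ := abs_le_of_sq_le_sq' h hr.le
        constructor <;> linarith
      · rintro ⟨hl, hu⟩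
        refine ⟨ht0, ht1, ?_⟩
        simp only [Phi]
        rw [← hc, ← hr2]
        nlinarith
    have hfun : ∀ x : ℝ,
        (Dom α0 β0).indicator (fun p : ℝ × ℝ => Real.sqrt (Phi α0 β0 p.1 p.2)) (t, x)
          = (Set.Icc (-c - r) (-c + r)).indicator
              (fun x => Real.sqrt (r ^ 2 - (c + x) ^ 2)) x := by
      intro x
      have hphi : Phi α0 β0 t x = r ^ 2 - (c + x) ^ 2 := by
        simp only [Phi]; rw [hr2]
      by_cases hx : x ∈ Set.Icc (-c - r) (-c + r)
      · rw [Set.indicator_of_mem ((hset x).mpr hx), Set.indicator_of_mem hx, hphi]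
      · rw [Set.indicator_of_notMem (fun h => hx ((hset x).mp h)),
          Set.indicator_of_notMem hx]
    simp only [hfun]
    rw [integral_indicator measurableSet_Icc,
      Set.indicator_of_mem (Set.mem_Icc.mpr ⟨ht0, ht1⟩)]
    have hle : -c - r ≤ -c + r := by linarith
    rw [MeasureTheory.integral_Icc_eq_integral_Ioc, ← intervalIntegral.integral_of_le hle]
    have := intervalIntegral.integral_comp_add_left
      (fun u => Real.sqrt (r ^ 2 - u ^ 2)) c (a := -c - r) (b := -c + r)
    rw [this, show c + (-c - r) = -r by ring, show c + (-c + r) = r by ring,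
      int_sqrt_circle r hr, hr2]
  · have hz : ∀ x : ℝ,
        (Dom α0 β0).indicator (fun p : ℝ × ℝ => Real.sqrt (Phi α0 β0 p.1 p.2)) (t, x) = 0 := by
      intro x
      apply Set.indicator_of_notMem
      intro hmem
      exact ht ⟨hmem.1, hmem.2.1⟩
    simp only [hz, integral_zero, Set.indicator_of_notMem ht]

lemma outer_eq :
    (∫ t : ℝ, (Set.Icc (0:ℝ) 1).indicator (fun t => π * (1 + t ^ 2) / 2) t) = 2 * π / 3 := by
  rw [integral_indicator measurableSet_Icc, MeasureTheory.integral_Icc_eq_integral_Ioc,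
    ← intervalIntegral.integral_of_le (by norm_num : (0:ℝ) ≤ 1)]
  have : ∀ t : ℝ, π * (1 + t ^ 2) / 2 = (π / 2) * 1 + (π / 2) * t ^ 2 := by intro t; ring
  simp only [this]
  rw [intervalIntegral.integral_add (intervalIntegrable_const)
    ((intervalIntegral.intervalIntegrable_pow 2).const_mul _),
    intervalIntegral.integral_const_mul, intervalIntegral.integral_const_mul,
    integral_pow]
  simp
  ring

/-- Lemma 3.0 (ii): `∫_{pr₂𝒟} ψ(x) dx = ∬_𝒟 √(Φ(t,x)) dt dx = 2π/3`. -/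
theorem psi_integral_eq (α0 β0 : ℝ) :
    (∫ x in pr2Dom α0 β0, psi α0 β0 x) = 2 * π / 3 ∧
    (∫ p in Dom α0 β0, Real.sqrt (Phi α0 β0 p.1 p.2)) = 2 * π / 3 := by
  set F := (Dom α0 β0).indicator (fun p : ℝ × ℝ => Real.sqrt (Phi α0 β0 p.1 p.2)) with hF
  have hFint : Integrable F := F_integrable α0 β0
  -- double integral
  have hdouble : (∫ p in Dom α0 β0, Real.sqrt (Phi α0 β0 p.1 p.2)) = 2 * π / 3 := by
    rw [← integral_indicator (dom_closed α0 β0).measurableSet]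
    have hFint' : Integrable F ((volume : Measure ℝ).prod volume) := by
      rwa [← Measure.volume_eq_prod]
    have h1 : (∫ p : ℝ × ℝ, F p) = ∫ t : ℝ, ∫ x : ℝ, F (t, x) := by
      rw [show (∫ p : ℝ × ℝ, F p) = ∫ p : ℝ × ℝ, F p ∂((volume : Measure ℝ).prod volume) by
        rw [← Measure.volume_eq_prod]]
      exact MeasureTheory.integral_prod F hFint'
    rw [← hF, h1]
    simp only [hF, inner_eq α0 β0]
    exact outer_eq
  refine ⟨?_, hdouble⟩
  -- psi x = ∫ t, F (t, x)
  have hIsec_meas : ∀ x : ℝ, MeasurableSet (Isec α0 β0 x) := by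
    intro x
    have : Isec α0 β0 x = Set.Icc 0 1 ∩ {t : ℝ | 0 ≤ Phi α0 β0 t x} := rfl
    rw [this]
    exact measurableSet_Icc.inter
      (isClosed_le continuous_const (by unfold Phi; fun_prop)).measurableSet
  have hpsi : ∀ x : ℝ, psi α0 β0 x = ∫ t : ℝ, F (t, x) := by
    intro x
    rw [psi, ← integral_indicator (hIsec_meas x)]
    congr 1
    ext t
    by_cases h : t ∈ Isec α0 β0 x
    · rw [Set.indicator_of_mem h, hF, Set.indicator_of_mem]
      exact ⟨h.1.1, h.1.2, h.2⟩
    · rw [Set.indicator_of_notMem h, hF, Set.indicator_of_notMem]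
      intro hmem
      exact h ⟨⟨hmem.1, hmem.2.1⟩, hmem.2.2⟩
  -- psi vanishes off pr2Dom
  have hpsi0 : ∀ x ∉ pr2Dom α0 β0, psi α0 β0 x = 0 := by
    intro x hx
    have : Isec α0 β0 x = ∅ := by
      ext t
      simp only [Set.mem_empty_iff_false, iff_false]
      intro h
      exact hx ⟨(t, x), ⟨h.1.1, h.1.2, h.2⟩, rfl⟩
    rw [psi, this]
    simp
  rw [setIntegral_eq_integral_of_forall_compl_eq_zero hpsi0]
  have hFint' : Integrable F ((volume : Measure ℝ).prod volume) := by
    rwa [← Measure.volume_eq_prod]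
  have hswap : (∫ x : ℝ, ∫ t : ℝ, F (t, x)) = ∫ t : ℝ, ∫ x : ℝ, F (t, x) :=
    (MeasureTheory.integral_integral_swap (f := fun t x => F (t, x)) hFint').symm
  simp only [hpsi]
  rw [hswap]
  simp only [hF, inner_eq α0 β0]
  exact outer_eq
end

section
/- Let F(a) = ua² + va + w with u, v, w ∈ ℝ and u ≠ 0. Then for any K ∈ ℝ and L ∈ ℝ, the Lebesgue measure of the set {a ∈ ℝ : K ≤ F(a) ≤ K + L²} is at most 2|L|/√|u|. -/
open MeasureTheory Real

lemma quadratic_sublevel_measure_aux (u v w K L : ℝ) (hu : 0 < u) :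
    volume {a : ℝ | K ≤ u * a ^ 2 + v * a + w ∧ u * a ^ 2 + v * a + w ≤ K + L ^ 2} ≤
      ENNReal.ofReal (2 * |L| / Real.sqrt u) := by
  set a₀ : ℝ := -v / (2 * u) with ha₀
  set c : ℝ := w - v ^ 2 / (4 * u) with hc
  have hF : ∀ a : ℝ, u * a ^ 2 + v * a + w = u * (a - a₀) ^ 2 + c := by
    intro a; rw [ha₀, hc]; field_simp; ring
  set A : ℝ := max ((K - c) / u) 0 with hA
  set B : ℝ := max ((K + L ^ 2 - c) / u) 0 with hB
  have hA0 : 0 ≤ A := le_max_right _ _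
  have hAB : A ≤ B := by
    apply max_le_max _ le_rfl
    gcongr <;> nlinarith [sq_nonneg L]
  have hBA : B - A ≤ L ^ 2 / u := by
    have h1 : (K + L ^ 2 - c) / u = (K - c) / u + L ^ 2 / u := by ring
    have h2 : 0 ≤ L ^ 2 / u := by positivity
    have : B ≤ A + L ^ 2 / u := by
      rw [hA, hB, h1]
      refine max_le (add_le_add (le_max_left _ _) le_rfl) ?_
      linarith [le_max_right ((K - c)/u) (0:ℝ)]
    linarith
  set s := Real.sqrt A with hs
  set t := Real.sqrt B with ht
  have hst : s ≤ t := Real.sqrt_le_sqrt hAB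
  have hsub : {a : ℝ | K ≤ u * a ^ 2 + v * a + w ∧ u * a ^ 2 + v * a + w ≤ K + L ^ 2} ⊆
      Set.Icc (a₀ - t) (a₀ - s) ∪ Set.Icc (a₀ + s) (a₀ + t) := by
    intro a ⟨h1, h2⟩
    rw [hF a] at h1 h2
    have hsq1 : A ≤ (a - a₀) ^ 2 := by
      refine max_le ((div_le_iff₀ hu).2 ?_) (sq_nonneg _)
      nlinarith
    have hsq2 : (a - a₀) ^ 2 ≤ B := by
      refine le_max_of_le_left ((le_div_iff₀ hu).2 ?_)
      nlinarith
    have habs1 : s ≤ |a - a₀| := by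
      rw [hs, ← Real.sqrt_sq_eq_abs]; exact Real.sqrt_le_sqrt hsq1
    have habs2 : |a - a₀| ≤ t := by
      rw [ht, ← Real.sqrt_sq_eq_abs]; exact Real.sqrt_le_sqrt hsq2
    rcases le_or_gt a₀ a with h | h
    · right
      rw [abs_of_nonneg (by linarith)] at habs1 habs2
      constructor <;> linarith
    · left
      rw [abs_of_neg (by linarith)] at habs1 habs2
      constructor <;> linarith
  have hts : t - s ≤ |L| / Real.sqrt u := by
    have h1 : t ≤ s + Real.sqrt (B - A) := by
      rw [ht, hs]
      have hd : 0 ≤ B - A := by linarith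
      calc Real.sqrt B = Real.sqrt (A + (B - A)) := by ring_nf
        _ ≤ Real.sqrt (A + (B - A)) := le_rfl
        _ ≤ Real.sqrt A + Real.sqrt (B - A) := by
            have h1 := Real.sq_sqrt hA0
            have h2 := Real.sq_sqrt hd
            have h3 := Real.sqrt_nonneg A
            have h4 := Real.sqrt_nonneg (B - A)
            calc Real.sqrt (A + (B - A))
                ≤ Real.sqrt ((Real.sqrt A + Real.sqrt (B - A)) ^ 2) :=
                  Real.sqrt_le_sqrt (by nlinarith [mul_nonneg h3 h4])
              _ = Real.sqrt A + Real.sqrt (B - A) := Real.sqrt_sq (by positivity)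
    have h2 : Real.sqrt (B - A) ≤ |L| / Real.sqrt u := by
      calc Real.sqrt (B - A) ≤ Real.sqrt (L ^ 2 / u) := Real.sqrt_le_sqrt hBA
        _ = |L| / Real.sqrt u := by
            rw [Real.sqrt_div (sq_nonneg L), Real.sqrt_sq_eq_abs]
    linarith
  calc volume {a : ℝ | K ≤ u * a ^ 2 + v * a + w ∧ u * a ^ 2 + v * a + w ≤ K + L ^ 2}
      ≤ volume (Set.Icc (a₀ - t) (a₀ - s) ∪ Set.Icc (a₀ + s) (a₀ + t)) :=
        measure_mono hsub
    _ ≤ volume (Set.Icc (a₀ - t) (a₀ - s)) + volume (Set.Icc (a₀ + s) (a₀ + t)) :=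
        measure_union_le _ _
    _ = ENNReal.ofReal (t - s) + ENNReal.ofReal (t - s) := by
        rw [Real.volume_Icc, Real.volume_Icc]; ring_nf
    _ = ENNReal.ofReal ((t - s) + (t - s)) := by
        rw [ENNReal.ofReal_add (by linarith) (by linarith)]
    _ ≤ ENNReal.ofReal (2 * |L| / Real.sqrt u) := by
        apply ENNReal.ofReal_le_ofReal; rw [mul_div_assoc]; linarith

/-- Lemma 3.4: if `F(a) = ua² + va + w` with `u ≠ 0`, then for any `K` and `L` the set
`{a : K ≤ F(a) ≤ K + L²}` has Lebesgue measure at most `2|L|/√|u|`. -/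
theorem quadratic_sublevel_measure (u v w K L : ℝ) (hu : u ≠ 0) :
    volume {a : ℝ | K ≤ u * a ^ 2 + v * a + w ∧ u * a ^ 2 + v * a + w ≤ K + L ^ 2} ≤
      ENNReal.ofReal (2 * |L| / Real.sqrt |u|) := by
  rcases hu.lt_or_gt with h | h
  · have hset : {a : ℝ | K ≤ u * a ^ 2 + v * a + w ∧ u * a ^ 2 + v * a + w ≤ K + L ^ 2} =
        {a : ℝ | -(K + L ^ 2) ≤ -u * a ^ 2 + -v * a + -w ∧
          -u * a ^ 2 + -v * a + -w ≤ -(K + L ^ 2) + L ^ 2} := by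
      ext a; constructor <;> intro ⟨h1, h2⟩ <;> constructor <;> nlinarith
    rw [hset, abs_of_neg h]
    exact quadratic_sublevel_measure_aux (-u) (-v) (-w) (-(K + L ^ 2)) L (by linarith)
  · rw [abs_of_pos h]
    exact quadratic_sublevel_measure_aux u v w K L h
end

section
/- Let a, b, d be positive integers with gcd(a,b,d) = 1. Let d₁ denote the largest divisor of d which is relatively prime to b, and put d₂ = d/d₁. Then #{m ∈ ℤ : 0 ≤ m ≤ 2d−1, gcd(a + bm, d) = 1} = 2·φ(d₁)·d₂. -/
open Finset

lemma filter_range_mul_card {p : ℕ → Prop} [DecidablePred p] {n : ℕ}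
    (hp : Function.Periodic p n) (k : ℕ) :
    ((Finset.range (k * n)).filter p).card = k * ((Finset.range n).filter p).card := by
  induction k with
  | zero => simp
  | succ k ih =>
    have h1 : range ((k + 1) * n) = range (k * n) ∪ Ico (k * n) (k * n + n) := by
      simp only [range_eq_Ico]
      rw [Finset.Ico_union_Ico_eq_Ico (Nat.zero_le _) (Nat.le_add_right _ _)]
      ring_nf
    rw [h1, filter_union, card_union_of_disjoint, ih,
      Nat.filter_Ico_card_eq_of_periodic _ _ _ hp, Nat.count_eq_card_filter_range]
    · ring
    · exact Finset.disjoint_filter_filter (by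
        rw [range_eq_Ico]
        exact Finset.Ico_disjoint_Ico_consecutive 0 (k*n) (k*n+n))

lemma count_coprime_linear (a b n : ℕ) (hn : 0 < n) (hbn : Nat.Coprime b n) :
    ((Finset.range n).filter fun m => Nat.Coprime (a + b * m) n).card = Nat.totient n := by
  haveI : NeZero n := ⟨hn.ne'⟩
  rw [Nat.totient]
  have key : ∀ (q : ZMod n → Prop) [DecidablePred q],
      ((Finset.range n).filter fun m : ℕ => q ((m : ℕ) : ZMod n)).card =
        (Finset.univ.filter q).card := by
    intro q _
    refine Finset.card_bij (fun m _ => ((m : ℕ) : ZMod n)) ?_ ?_ ?_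
    · intro m hm
      simp only [mem_filter, mem_range] at hm
      simp [hm.2]
    · intro m₁ h₁ m₂ h₂ h
      simp only [mem_filter, mem_range] at h₁ h₂
      have := congrArg ZMod.val h
      rwa [ZMod.val_natCast_of_lt h₁.1, ZMod.val_natCast_of_lt h₂.1] at this
    · intro y hy
      refine ⟨y.val, ?_, by simp⟩
      simp only [mem_filter, mem_range] at hy ⊢
      exact ⟨y.val_lt, by simpa using hy⟩
  have h1 : ((Finset.range n).filter fun m => Nat.Coprime (a + b * m) n).card
      = (Finset.univ.filter fun x : ZMod n => IsUnit ((a : ZMod n) + b * x)).card := by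
    rw [← key]
    congr 1
    apply Finset.filter_congr
    intro m _
    rw [← ZMod.isUnit_iff_coprime]
    push_cast
    rfl
  have h2 : ((Finset.range n).filter n.Coprime).card
      = (Finset.univ.filter fun x : ZMod n => IsUnit x).card := by
    rw [← key]
    congr 1
    apply Finset.filter_congr
    intro m _
    rw [ZMod.isUnit_iff_coprime]
    exact ⟨Nat.Coprime.symm, Nat.Coprime.symm⟩
  rw [h1, h2]
  -- bijection x ↦ a + b * x
  obtain ⟨u, hu⟩ := (ZMod.isUnit_iff_coprime b n).2 hbn
  refine Finset.card_bij (fun x _ => (a : ZMod n) + b * x) ?_ ?_ ?_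
  · intro x hx
    simp only [mem_filter, mem_univ, true_and] at hx ⊢
    exact hx
  · intro x₁ h₁ x₂ h₂ h
    have : (b : ZMod n) * x₁ = b * x₂ := by
      have := add_left_cancel h
      exact this
    rw [← hu] at this
    exact (Units.mul_right_inj u).mp this
  · intro y hy
    refine ⟨(u⁻¹ : (ZMod n)ˣ) * (y - a), ?_, ?_⟩
    · simp only [mem_filter, mem_univ, true_and] at hy ⊢
      have : (a : ZMod n) + b * ((u⁻¹ : (ZMod n)ˣ) * (y - a)) = y := by
        rw [← hu, ← mul_assoc]
        simp
      rw [this]; exact hy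
    · show (a : ZMod n) + b * _ = y
      rw [← hu, ← mul_assoc]
      simp

/-- Lemma 4.1: let `a, b, d` be positive integers with `gcd(a,b,d) = 1`, let `d₁` be the
largest divisor of `d` relatively prime to `b`, and `d₂ = d/d₁`.  Then
`#{0 ≤ m ≤ 2d-1 : gcd(a + bm, d) = 1} = 2 φ(d₁) d₂`. -/
theorem count_coprime_arith_progression (a b d : ℕ)
    (ha : 0 < a) (hb : 0 < b) (hd : 0 < d)
    (habd : Nat.gcd a (Nat.gcd b d) = 1)
    (d₁ d₂ : ℕ) (hd₁ : d₁ ∣ d) (hd₁b : Nat.Coprime d₁ b)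
    (hd₁max : ∀ e : ℕ, e ∣ d → Nat.Coprime e b → e ≤ d₁)
    (hd₂ : d₂ = d / d₁) :
    ((Finset.range (2 * d)).filter fun m => Nat.gcd (a + b * m) d = 1).card =
      2 * Nat.totient d₁ * d₂ := by
  have hd₁pos : 0 < d₁ := Nat.pos_of_dvd_of_pos hd₁ hd
  have hdeq : d = d₁ * d₂ := by
    rw [hd₂, Nat.mul_div_cancel' hd₁]
  have hd₂pos : 0 < d₂ := by
    rw [hd₂]; exact Nat.div_pos (Nat.le_of_dvd hd hd₁) hd₁pos
  -- every prime of d₂ divides b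
  have hprime : ∀ p : ℕ, p.Prime → p ∣ d₂ → p ∣ b := by
    intro p hp hpd₂
    by_contra hpb
    have he : d₁ * p ∣ d := by
      rw [hdeq]
      exact mul_dvd_mul_left d₁ hpd₂
    have hecop : Nat.Coprime (d₁ * p) b :=
      Nat.Coprime.mul hd₁b ((hp.coprime_iff_not_dvd).2 hpb)
    have := hd₁max (d₁ * p) he hecop
    nlinarith [hp.two_le]
  -- coprime a d₂
  have had₂ : Nat.Coprime a d₂ := by
    by_contra hco
    have hg : Nat.gcd a d₂ ≠ 1 := hco
    set g := Nat.gcd a d₂ with hgdef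
    have hgpos : 0 < g := Nat.gcd_pos_of_pos_right a hd₂pos
    have hpg : g.minFac.Prime := Nat.minFac_prime hg
    have h1 : g.minFac ∣ a := (Nat.minFac_dvd g).trans (Nat.gcd_dvd_left _ _)
    have h2 : g.minFac ∣ d₂ := (Nat.minFac_dvd g).trans (Nat.gcd_dvd_right _ _)
    have h3 : g.minFac ∣ b := hprime _ hpg h2
    have h4 : g.minFac ∣ d := h2.trans ⟨d₁, by rw [hdeq]; ring⟩
    have : g.minFac ∣ 1 := habd ▸ Nat.dvd_gcd h1 (Nat.dvd_gcd h3 h4)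
    exact hpg.one_lt.ne' (Nat.dvd_one.mp this)
  -- reduce condition to coprimality with d₁
  have hcond : ∀ m, (Nat.gcd (a + b * m) d = 1) ↔ Nat.Coprime (a + b * m) d₁ := by
    intro m
    have hcd₂ : Nat.Coprime (a + b * m) d₂ := by
      by_contra hco
      set g := Nat.gcd (a + b * m) d₂ with hgdef
      have hg : g ≠ 1 := hco
      have hpg : g.minFac.Prime := Nat.minFac_prime hg
      have h2 : g.minFac ∣ d₂ := (Nat.minFac_dvd g).trans (Nat.gcd_dvd_right _ _)
      have h3 : g.minFac ∣ b := hprime _ hpg h2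
      have h1 : g.minFac ∣ a + b * m := (Nat.minFac_dvd g).trans (Nat.gcd_dvd_left _ _)
      have h5 : g.minFac ∣ a := (Nat.dvd_add_right (h3.mul_right m)).mp (by rwa [add_comm] at h1)
      have : g.minFac ∣ 1 := had₂ ▸ Nat.dvd_gcd h5 h2
      exact hpg.one_lt.ne' (Nat.dvd_one.mp this)
    constructor
    · intro h
      exact Nat.Coprime.coprime_dvd_right hd₁ h
    · intro h
      show Nat.Coprime _ d
      rw [hdeq]
      exact Nat.Coprime.mul_right h hcd₂
    -- done
  have hfilter : ((Finset.range (2 * d)).filter fun m => Nat.gcd (a + b * m) d = 1)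
      = (Finset.range (2 * d)).filter fun m => Nat.Coprime (a + b * m) d₁ := by
    apply Finset.filter_congr
    intro m _
    exact hcond m
  rw [hfilter]
  have hper : Function.Periodic (fun m => Nat.Coprime (a + b * m) d₁) d₁ := by
    intro m
    simp only [Nat.Coprime]
    rw [mul_add, ← add_assoc, mul_comm b d₁, Nat.gcd_add_mul_left_left]
  have h2d : 2 * d = (2 * d₂) * d₁ := by rw [hdeq]; ring
  rw [h2d, filter_range_mul_card hper,
    count_coprime_linear a b d₁ hd₁pos (Nat.Coprime.symm hd₁b)]
  ring
end

section
/- Let q be a positive integer, let a, b be integers with 1 ≤ a, b ≤ q and gcd(a,b,q) = 1, and let (A,B) ∈ 𝒩_{a,b,q} with B ≤ A. Let C = (bA − aB)/q (an integer by definition of 𝒩_{a,b,q}), let B̄ be the inverse of B modulo A, and let u be the unique integer with u ≡ −B̄·C (mod A) and 0 ≤ u ≤ A−1. Then v = (Bu + C)/A is an integer and 0 ≤ v ≤ B. -/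
/-- The construction following Lemma 4.2: let `(A,B) ∈ 𝒩_{a,b,q}` with `B ≤ A`, let
`C = (bA - aB)/q`, let `B̄` be the inverse of `B` modulo `A`, and let `u` be the unique
integer with `u ≡ -B̄C (mod A)` and `0 ≤ u ≤ A - 1`.  Then `v = (Bu + C)/A` is an
integer and `0 ≤ v ≤ B`. -/
theorem v_is_integer_and_bounded (q a b : ℕ)
    (hq : 0 < q) (ha : 1 ≤ a) (haq : a ≤ q) (hb : 1 ≤ b) (hbq : b ≤ q)
    (habq : Nat.gcd a (Nat.gcd b q) = 1)
    (A B : ℤ) (hA1 : 1 ≤ A) (hA2 : A ≤ 2 * (q : ℤ)) (hB1 : 1 ≤ B) (hB2 : B ≤ 2 * (q : ℤ))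
    (hAB : Int.gcd A B = 1) (hdvd : (q : ℤ) ∣ A * (b : ℤ) - B * (a : ℤ))
    (hBA : B ≤ A)
    (C : ℤ) (hC : (q : ℤ) * C = (b : ℤ) * A - (a : ℤ) * B)
    (Bbar : ℤ) (hBbar : B * Bbar ≡ 1 [ZMOD A])
    (u : ℤ) (hu0 : 0 ≤ u) (hu1 : u ≤ A - 1) (hu : u ≡ -(Bbar * C) [ZMOD A]) :
    A ∣ B * u + C ∧ 0 ≤ (B * u + C) / A ∧ (B * u + C) / A ≤ B := by
  have hqz : (1 : ℤ) ≤ (q : ℤ) := by exact_mod_cast hq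
  have haz : (1 : ℤ) ≤ (a : ℤ) := by exact_mod_cast ha
  have haqz : (a : ℤ) ≤ (q : ℤ) := by exact_mod_cast haq
  have hbz : (1 : ℤ) ≤ (b : ℤ) := by exact_mod_cast hb
  have hbqz : (b : ℤ) ≤ (q : ℤ) := by exact_mod_cast hbq
  -- B * u ≡ -C (mod A)
  have h1 : B * u ≡ -C [ZMOD A] := by
    calc B * u ≡ B * (-(Bbar * C)) [ZMOD A] := hu.mul_left B
      _ = (B * Bbar) * (-C) := by ring
      _ ≡ 1 * (-C) [ZMOD A] := hBbar.mul_right _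
      _ = -C := by ring
  have hd : A ∣ B * u + C := by
    have h2 := h1.dvd
    have : -C - B * u = -(B * u + C) := by ring
    rw [this, dvd_neg] at h2
    exact h2
  obtain ⟨k, hk⟩ := hd
  -- bounds on C
  have hC1 : -B < C := by nlinarith
  have hC2 : C < A + B := by nlinarith
  have hBu0 : 0 ≤ B * u := mul_nonneg (by linarith) hu0
  have hBu1 : B * u ≤ B * (A - 1) := mul_le_mul_of_nonneg_left (by linarith) (by linarith)
  have hk0 : 0 ≤ k := by nlinarith
  have hkB : k ≤ B := by nlinarith
  have hdiv : (B * u + C) / A = k := by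
    rw [hk, Int.mul_ediv_cancel_left k (by linarith : A ≠ 0)]
  refine ⟨⟨k, hk⟩, ?_, ?_⟩ <;> rw [hdiv] <;> assumption
end

section
/- Let q, Q, M be positive integers with Q ≥ 12(q+1) and M ≤ ⌊Q/(4q)⌋, and let a, b be integers with 1 ≤ a, b ≤ q and gcd(a,b,q) = 1. Then: (i) every point P′ of 𝓜̃_{a,b,q} satisfies ‖P P′‖ ≥ Q/3 for every P ∈ [0,1]²; and (ii) 𝓜̃_{a,b,q} ⊆ [0,Q]². -/
open Real

/-- The integer `C = (bA - aB)/q` attached to a pair `(A,B) ∈ 𝒩_{a,b,q}`. -/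
def Cint (a b q : ℕ) (A B : ℤ) : ℤ := ((b : ℤ) * A - (a : ℤ) * B) / (q : ℤ)

/-- The set `𝓜_{A,B}` in the case `B ≤ A`: with `C = (bA-aB)/q`, `u` the unique integer
in `[0, A-1]` with `A ∣ Bu + C`, `v = (Bu+C)/A` and `s = ⌊Q/A⌋`, it is the set of lattice
points `(u + mA, v + mB)` with `s - M ≤ m ≤ s - 1`. -/
def MMle (a b q Q M : ℕ) (A B : ℤ) : Set (ℤ × ℤ) :=
  {p | ∃ u m : ℤ, 0 ≤ u ∧ u < A ∧ A ∣ (B * u + Cint a b q A B) ∧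
    (Q : ℤ) / A - (M : ℤ) ≤ m ∧ m ≤ (Q : ℤ) / A - 1 ∧
    p = (u + m * A, (B * u + Cint a b q A B) / A + m * B)}

/-- The set `𝓜_{A,B}`: for `A < B` it is obtained by the same recipe with the roles of
the two coordinates (and of `A` and `B`, `a` and `b`) exchanged. -/
def MMset (a b q Q M : ℕ) (A B : ℤ) : Set (ℤ × ℤ) :=
  if B ≤ A then MMle a b q Q M A B else Prod.swap '' MMle b a q Q M B A

/-- The predicate `(A,B) ∈ 𝒩_{a,b,q}`. -/
def NNpred (a b q : ℕ) (A B : ℤ) : Prop :=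
  1 ≤ A ∧ A ≤ 2 * (q : ℤ) ∧ 1 ≤ B ∧ B ≤ 2 * (q : ℤ) ∧ Int.gcd A B = 1 ∧
    (q : ℤ) ∣ (A * (b : ℤ) - B * (a : ℤ))

/-- `𝓜̃_{a,b,q} = ⋃_{(A,B) ∈ 𝒩_{a,b,q}} 𝓜_{A,B}`. -/
def MMtilde (a b q Q M : ℕ) : Set (ℤ × ℤ) :=
  ⋃ A : ℤ, ⋃ B : ℤ, ⋃ (_ : NNpred a b q A B), MMset a b q Q M A B

lemma mmle_key (q Q M a b : ℕ) (hq : 0 < q) (hQ : 12 * (q + 1) ≤ Q) (hM' : M ≤ Q / (4 * q))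
    (ha : 1 ≤ a) (haq : a ≤ q) (hb : 1 ≤ b) (hbq : b ≤ q)
    (A B : ℤ) (hA1 : 1 ≤ A) (hA2 : A ≤ 2 * (q : ℤ)) (hB1 : 1 ≤ B) (hBA : B ≤ A)
    (hdvd : (q : ℤ) ∣ A * (b : ℤ) - B * (a : ℤ)) :
    ∀ p ∈ MMle a b q Q M A B,
      (Q : ℤ) + 3 ≤ 3 * p.1 ∧ p.1 ≤ Q ∧ 0 ≤ p.2 ∧ p.2 ≤ Q := by
  rintro p ⟨u, m, hu0, huA, hAdvd, hm1, hm2, rfl⟩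
  have hqz : (0:ℤ) < q := by exact_mod_cast hq
  have haz : (1:ℤ) ≤ a := by exact_mod_cast ha
  have hbz : (1:ℤ) ≤ b := by exact_mod_cast hb
  have haqz : (a:ℤ) ≤ q := by exact_mod_cast haq
  have hbqz : (b:ℤ) ≤ q := by exact_mod_cast hbq
  have hQZ : 12 * ((q:ℤ) + 1) ≤ Q := by exact_mod_cast hQ
  have hM4 : (M:ℤ) * (4 * q) ≤ Q := by
    have := (Nat.le_div_iff_mul_le (by positivity : 0 < 4 * q)).mp hM'
    exact_mod_cast this
  have hM0 : (0:ℤ) ≤ M := by positivity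
  have hA0 : (0:ℤ) ≤ A := by linarith
  have hB0 : (0:ℤ) ≤ B := by linarith
  set C := Cint a b q A B with hCdef
  have hdvd' : (q:ℤ) ∣ (b:ℤ) * A - (a:ℤ) * B := by
    obtain ⟨k, hk⟩ := hdvd; exact ⟨k, by linarith⟩
  have hCq : C * q = (b:ℤ) * A - (a:ℤ) * B := Int.ediv_mul_cancel hdvd'
  have hCub : C ≤ A - 1 := by
    have h1 : C * q < A * q := by
      linarith [mul_le_mul_of_nonneg_right hbqz hA0,
        mul_le_mul_of_nonneg_right haz hB0]
    have := lt_of_mul_lt_mul_right h1 (le_of_lt hqz)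
    linarith
  have hClb : 1 - B ≤ C := by
    have h1 : (-B) * q < C * q := by
      linarith [mul_le_mul_of_nonneg_right hbz hA0,
        mul_le_mul_of_nonneg_right haqz hB0]
    have := lt_of_mul_lt_mul_right h1 (le_of_lt hqz)
    linarith
  set v := (B * u + C) / A with hvdef
  have hvA : v * A = B * u + C := Int.ediv_mul_cancel hAdvd
  have hv0 : 0 ≤ v := by
    have h1 : (-1) * A < v * A := by
      linarith [mul_nonneg hB0 hu0]
    have := lt_of_mul_lt_mul_right h1 hA0
    linarith
  have hvB : v ≤ B := by
    have h1 : v * A < (B + 1) * A := by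
      linarith [mul_le_mul_of_nonneg_left (by linarith : u ≤ A - 1) hB0]
    have := lt_of_mul_lt_mul_right h1 hA0
    linarith
  set s := (Q:ℤ) / A with hsdef
  have hsA : s * A ≤ Q := Int.ediv_mul_le _ (by linarith)
  have hsA' : (Q:ℤ) < (s + 1) * A := Int.lt_ediv_add_one_mul_self _ (by linarith)
  have hmA : (s - M) * A ≤ m * A := mul_le_mul_of_nonneg_right hm1 hA0
  have hmA' : m * A ≤ (s - 1) * A := mul_le_mul_of_nonneg_right hm2 hA0
  have hMA : (M:ℤ) * A ≤ (M:ℤ) * (2 * q) := mul_le_mul_of_nonneg_left hA2 hM0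
  have hx : (Q:ℤ) + 3 ≤ 3 * (u + m * A) := by linarith
  have hsM : 1 ≤ s - M := by
    have h1 : 0 * A < (s - M) * A := by linarith
    have h2 := lt_of_mul_lt_mul_right h1 hA0
    linarith [Int.lt_iff_add_one_le.mp h2]
  have hm0 : (0:ℤ) ≤ m := by linarith
  refine ⟨hx, by simp only; linarith, ?_, ?_⟩
  · simp only
    linarith [mul_nonneg hm0 hB0]
  · have hs0 : (0:ℤ) ≤ s := by linarith
    have hmB : m * B ≤ (s - 1) * B := mul_le_mul_of_nonneg_right hm2 hB0
    have hsB : s * B ≤ s * A := mul_le_mul_of_nonneg_left hBA hs0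
    simp only
    linarith

lemma mmtilde_key (q Q M a b : ℕ) (hq : 0 < q) (hQ : 12 * (q + 1) ≤ Q) (hM' : M ≤ Q / (4 * q))
    (ha : 1 ≤ a) (haq : a ≤ q) (hb : 1 ≤ b) (hbq : b ≤ q) :
    ∀ p ∈ MMtilde a b q Q M,
      (0 ≤ p.1 ∧ p.1 ≤ (Q:ℤ) ∧ 0 ≤ p.2 ∧ p.2 ≤ (Q:ℤ)) ∧
      ((Q : ℤ) + 3 ≤ 3 * p.1 ∨ (Q : ℤ) + 3 ≤ 3 * p.2) := by
  intro p hp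
  simp only [MMtilde, Set.mem_iUnion] at hp
  obtain ⟨A, B, hN, hp⟩ := hp
  obtain ⟨hA1, hA2, hB1, hB2, -, hdvd⟩ := hN
  have hQ0 : (0:ℤ) ≤ Q := by positivity
  rw [MMset] at hp
  by_cases hBA : B ≤ A
  · rw [if_pos hBA] at hp
    obtain ⟨h1, h2, h3, h4⟩ :=
      mmle_key q Q M a b hq hQ hM' ha haq hb hbq A B hA1 hA2 hB1 hBA hdvd p hp
    exact ⟨⟨by linarith, h2, h3, h4⟩, Or.inl h1⟩
  · rw [if_neg hBA] at hp
    obtain ⟨p', hp', rfl⟩ := hp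
    have hdvd' : (q:ℤ) ∣ B * (a:ℤ) - A * (b:ℤ) := by
      obtain ⟨k, hk⟩ := hdvd; exact ⟨-k, by linarith⟩
    obtain ⟨h1, h2, h3, h4⟩ :=
      mmle_key q Q M b a hq hQ hM' hb hbq ha haq B A hB1 hB2 hA1 (by linarith [not_le.mp hBA])
        hdvd' p' hp'
    simp only [Prod.fst_swap, Prod.snd_swap]
    exact ⟨⟨h3, h4, by linarith, h2⟩, Or.inr h1⟩

/-- Lemma 4.3 (i) and (ii): every point of `𝓜̃_{a,b,q}` is at distance at least `Q/3`
from the unit square, and `𝓜̃_{a,b,q} ⊆ [0,Q]²`. -/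
theorem MMtilde_far_and_in_box (q Q M a b : ℕ)
    (hq : 0 < q) (hQpos : 0 < Q) (hQ : 12 * (q + 1) ≤ Q)
    (hM : 0 < M) (hM' : M ≤ Q / (4 * q))
    (ha : 1 ≤ a) (haq : a ≤ q) (hb : 1 ≤ b) (hbq : b ≤ q)
    (hgcd : Nat.gcd a (Nat.gcd b q) = 1) :
    (∀ p ∈ MMtilde a b q Q M, ∀ x y : ℝ,
      x ∈ Set.Icc (0 : ℝ) 1 → y ∈ Set.Icc (0 : ℝ) 1 →
      (Q : ℝ) / 3 ≤ Real.sqrt ((x - (p.1 : ℝ)) ^ 2 + (y - (p.2 : ℝ)) ^ 2)) ∧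
    (∀ p ∈ MMtilde a b q Q M,
      0 ≤ p.1 ∧ p.1 ≤ (Q : ℤ) ∧ 0 ≤ p.2 ∧ p.2 ≤ (Q : ℤ)) := by
  constructor
  · intro p hp x y hx hy
    obtain ⟨-, hbig⟩ := mmtilde_key q Q M a b hq hQ hM' ha haq hb hbq p hp
    obtain ⟨hx0, hx1⟩ := hx
    obtain ⟨hy0, hy1⟩ := hy
    rcases hbig with h | h
    · have h' : (Q:ℝ) + 3 ≤ 3 * (p.1 : ℝ) := by exact_mod_cast h
      calc (Q:ℝ) / 3 ≤ (p.1 : ℝ) - x := by linarith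
        _ ≤ |x - (p.1 : ℝ)| := by
            rw [abs_sub_comm]; exact le_abs_self _
        _ = Real.sqrt ((x - (p.1 : ℝ)) ^ 2) := (Real.sqrt_sq_eq_abs _).symm
        _ ≤ _ := Real.sqrt_le_sqrt (by nlinarith [sq_nonneg (y - (p.2:ℝ))])
    · have h' : (Q:ℝ) + 3 ≤ 3 * (p.2 : ℝ) := by exact_mod_cast h
      calc (Q:ℝ) / 3 ≤ (p.2 : ℝ) - y := by linarith
        _ ≤ |y - (p.2 : ℝ)| := by
            rw [abs_sub_comm]; exact le_abs_self _
        _ = Real.sqrt ((y - (p.2 : ℝ)) ^ 2) := (Real.sqrt_sq_eq_abs _).symm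
        _ ≤ _ := Real.sqrt_le_sqrt (by nlinarith [sq_nonneg (x - (p.1:ℝ))])
  · intro p hp
    exact (mmtilde_key q Q M a b hq hQ hM' ha haq hb hbq p hp).1
end

section
/- Let q, Q, M be positive integers with Q ≥ 12(q+1) and M ≤ ⌊Q/(4q)⌋, and let a, b be integers with 1 ≤ a, b ≤ q and gcd(a,b,q) = 1. Then the sets 𝓜_{A,B}, as (A,B) ranges over the pairs of 𝒩_{a,b,q} with B ≤ A, are pairwise disjoint. -/
lemma MMle_key {a b q Q M : ℕ} {A B : ℤ} (hA : 0 < A) {p : ℤ × ℤ}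
    (hp : p ∈ MMle a b q Q M A B) :
    A * p.2 - B * p.1 = Cint a b q A B ∧ (Q : ℤ) + 1 - A - (M : ℤ) * A ≤ p.1 := by
  obtain ⟨u, m, hu0, huA, hdvd, hm1, hm2, hpe⟩ := hp
  subst hpe
  constructor
  · have key : A * ((B * u + Cint a b q A B) / A) = B * u + Cint a b q A B :=
      Int.mul_ediv_cancel' hdvd
    simp only
    linear_combination key
  · have h1 : (Q : ℤ) % A < A := Int.emod_lt_of_pos _ hA
    have h2 : (0:ℤ) ≤ (Q : ℤ) % A := Int.emod_nonneg _ (ne_of_gt hA)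
    have h3 : A * ((Q:ℤ) / A) + (Q:ℤ) % A = Q := Int.mul_ediv_add_emod _ _
    have h4 : ((Q:ℤ) / A - (M:ℤ)) * A ≤ m * A :=
      mul_le_mul_of_nonneg_right hm1 hA.le
    have h5 : ((Q:ℤ) / A - (M:ℤ)) * A = A * ((Q:ℤ)/A) - (M:ℤ)*A := by ring
    simp only
    linarith

/-- Lemma 4.3 (iii): the sets `𝓜_{A,B}`, for `(A,B) ∈ 𝒩_{a,b,q}` with `B ≤ A`, are
pairwise disjoint. -/
theorem MMle_pairwise_disjoint (q Q M a b : ℕ)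
    (hq : 0 < q) (hQpos : 0 < Q) (hQ : 12 * (q + 1) ≤ Q)
    (hM : 0 < M) (hM' : M ≤ Q / (4 * q))
    (ha : 1 ≤ a) (haq : a ≤ q) (hb : 1 ≤ b) (hbq : b ≤ q)
    (hgcd : Nat.gcd a (Nat.gcd b q) = 1) :
    ∀ A B A' B' : ℤ, NNpred a b q A B → NNpred a b q A' B' →
      B ≤ A → B' ≤ A' → (A, B) ≠ (A', B') →
      Disjoint (MMle a b q Q M A B) (MMle a b q Q M A' B') := by
  intro A B A' B' hN hN' hBA hBA' hne
  obtain ⟨hA1, hA2, hB1, hB2, hcop, hdvd⟩ := hN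
  obtain ⟨hA1', hA2', hB1', hB2', hcop', hdvd'⟩ := hN'
  rw [Set.disjoint_left]
  rintro p hp hp'
  have hA : (0:ℤ) < A := hA1
  have hA' : (0:ℤ) < A' := hA1'
  obtain ⟨e1, hx1⟩ := MMle_key hA hp
  obtain ⟨e2, hx2⟩ := MMle_key hA' hp'
  have hqC : (q:ℤ) * Cint a b q A B = (b:ℤ)*A - (a:ℤ)*B := by
    refine Int.mul_ediv_cancel' ?_
    obtain ⟨k, hk⟩ := hdvd
    exact ⟨k, by linarith⟩
  have hqC' : (q:ℤ) * Cint a b q A' B' = (b:ℤ)*A' - (a:ℤ)*B' := by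
    refine Int.mul_ediv_cancel' ?_
    obtain ⟨k, hk⟩ := hdvd'
    exact ⟨k, by linarith⟩
  have hq1 : (1:ℤ) ≤ (q:ℤ) := by exact_mod_cast hq
  have ha1 : (1:ℤ) ≤ (a:ℤ) := by exact_mod_cast ha
  have haq1 : (a:ℤ) ≤ (q:ℤ) := by exact_mod_cast haq
  have hx : (2:ℤ) ≤ p.1 := by
    have hMq : (M:ℤ) * (4*(q:ℤ)) ≤ (Q:ℤ) := by
      have hn : M * (4*q) ≤ Q := (Nat.le_div_iff_mul_le (by omega)).mp hM'
      exact_mod_cast hn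
    have hM0 : (0:ℤ) ≤ (M:ℤ) := Int.natCast_nonneg M
    have hMA : (M:ℤ) * A ≤ (M:ℤ) * (2*(q:ℤ)) := mul_le_mul_of_nonneg_left hA2 hM0
    have hQ' : (12:ℤ)*((q:ℤ)+1) ≤ (Q:ℤ) := by exact_mod_cast hQ
    linarith
  have key : ((q:ℤ)*p.1 - (a:ℤ)) * (A*B' - A'*B) = 0 := by
    linear_combination ((q:ℤ)*A') * e1 - ((q:ℤ)*A) * e2 + A' * hqC - A * hqC'
  have hD : A * B' = A' * B := by
    rcases mul_eq_zero.mp key with h | h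
    · exfalso
      nlinarith [mul_le_mul_of_nonneg_left hx (show (0:ℤ) ≤ (q:ℤ) by linarith)]
    · linarith
  have cAB : IsCoprime A B := Int.isCoprime_iff_gcd_eq_one.mpr hcop
  have cAB' : IsCoprime A' B' := Int.isCoprime_iff_gcd_eq_one.mpr hcop'
  have d1 : A ∣ A' := cAB.dvd_of_dvd_mul_right ⟨B', hD.symm⟩
  have d2 : A' ∣ A := cAB'.dvd_of_dvd_mul_right ⟨B, hD⟩
  have hAA : A = A' := Int.dvd_antisymm hA.le hA'.le d1 d2
  have hBB : B = B' := by
    rw [hAA] at hD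
    exact (mul_left_cancel₀ (ne_of_gt hA') hD).symm
  exact hne (by rw [hAA, hBB])
end

section
/- There is an absolute constant c > 0 with the following property. Let q, Q, M be positive integers with Q ≥ 12(q+1) and M ≤ ⌊Q/(4q)⌋, let a, b be integers with 1 ≤ a, b ≤ q and gcd(a,b,q) = 1, let (A,B) ∈ 𝒩_{a,b,q} with B ≤ A, let (x,y) ∈ [0,1]², and let P, P′ be any two distinct points of 𝓜_{A,B}. Then the measure θ of the angle ∠P P_{(x,y)} P′ at the vertex (x,y) satisfies |θ| ≤ c·M·(|b − qy| + |qx − a|)/Q². -/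
open Real

open RealInnerProductSpace

lemma toPt_inner (a b c d : ℝ) : ⟪toPt a b, toPt c d⟫ = a * c + b * d := by
  simp [toPt, PiLp.inner_apply, Fin.sum_univ_two]; ring

lemma toPt_sub (a b c d : ℝ) : toPt a b - toPt c d = toPt (a - c) (b - d) := by
  ext i
  fin_cases i <;> simp [toPt]

lemma key (p1 p2 r1 r2 L : ℝ) (hL : 0 < L) (h1 : L ≤ p1) (h2 : 0 ≤ p2)
    (h3 : L ≤ r1) (h4 : 0 ≤ r2) :
    InnerProductGeometry.angle (toPt p1 p2) (toPt r1 r2) ≤ |p1 * r2 - p2 * r1| / L ^ 2 := by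
  set v := toPt p1 p2
  set w := toPt r1 r2
  have hinner : ⟪v, w⟫ = p1 * r1 + p2 * r2 := toPt_inner _ _ _ _
  have hIL : L ^ 2 ≤ ⟪v, w⟫ := by
    rw [hinner]; nlinarith
  have hIpos : 0 < ⟪v, w⟫ := lt_of_lt_of_le (by positivity) hIL
  have hcross : √(⟪v, v⟫ * ⟪w, w⟫ - ⟪v, w⟫ * ⟪v, w⟫) = |p1 * r2 - p2 * r1| := by
    rw [toPt_inner, toPt_inner, hinner, show (p1 * p1 + p2 * p2) * (r1 * r1 + r2 * r2) -
      (p1 * r1 + p2 * r2) * (p1 * r1 + p2 * r2) = (p1 * r2 - p2 * r1) ^ 2 by ring,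
      Real.sqrt_sq_eq_abs]
  set θ := InnerProductGeometry.angle v w with hθ
  have hvnorm : 0 < ‖v‖ := by
    rw [norm_pos_iff]
    intro h
    have := hinner
    rw [h, inner_zero_left] at this
    nlinarith
  have hwnorm : 0 < ‖w‖ := by
    rw [norm_pos_iff]
    intro h
    have := hinner
    rw [h, inner_zero_right] at this
    nlinarith
  have hcos : Real.cos θ * (‖v‖ * ‖w‖) = ⟪v, w⟫ := InnerProductGeometry.cos_angle_mul_norm_mul_norm v w
  have hsin : Real.sin θ * (‖v‖ * ‖w‖) = |p1 * r2 - p2 * r1| := by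
    rw [InnerProductGeometry.sin_angle_mul_norm_mul_norm, hcross]
  have hcospos : 0 < Real.cos θ := by
    have : 0 < ⟪v, w⟫ / (‖v‖ * ‖w‖) := by positivity
    rwa [InnerProductGeometry.cos_angle]
  have hθlt : θ < π / 2 := by
    by_contra h
    push_neg at h
    exact absurd hcospos (not_lt.2 (Real.cos_nonpos_of_pi_div_two_le_of_le h
      (le_trans (InnerProductGeometry.angle_le_pi v w) (by linarith [Real.pi_pos]))))
  have htan : Real.tan θ = |p1 * r2 - p2 * r1| / ⟪v, w⟫ := by
    rw [Real.tan_eq_sin_div_cos, ← hsin, ← hcos]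
    field_simp
  have hθtan : θ ≤ Real.tan θ := by
    rcases eq_or_lt_of_le (InnerProductGeometry.angle_nonneg v w) with h0 | h0
    · rw [hθ, ← h0]; simp [Real.tan_zero]
    · exact le_of_lt (Real.lt_tan h0 hθlt)
  calc θ ≤ |p1 * r2 - p2 * r1| / ⟪v, w⟫ := by rw [← htan]; exact hθtan
    _ ≤ |p1 * r2 - p2 * r1| / L ^ 2 :=
      div_le_div_of_nonneg_left (abs_nonneg _) (by positivity) hIL


set_option maxHeartbeats 1000000 in
/-- Estimate (4.18): there is an absolute constant `c > 0` such that for any two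
distinct points `P, P' ∈ 𝓜_{A,B}` (case `B ≤ A`) and any `(x,y) ∈ [0,1]²`, the angle
`θ = ∠ P P_{(x,y)} P'` satisfies `|θ| ≤ c M (|b - qy| + |qx - a|)/Q²`. -/
theorem angle_bound_on_MMle :
    ∃ c > (0 : ℝ), ∀ q Q M a b : ℕ,
      0 < q → 0 < Q → 12 * (q + 1) ≤ Q → 0 < M → M ≤ Q / (4 * q) →
      1 ≤ a → a ≤ q → 1 ≤ b → b ≤ q → Nat.gcd a (Nat.gcd b q) = 1 →
      ∀ A B : ℤ, NNpred a b q A B → B ≤ A →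
      ∀ P P', P ∈ MMle a b q Q M A B → P' ∈ MMle a b q Q M A B → P ≠ P' →
      ∀ x y : ℝ, x ∈ Set.Icc (0 : ℝ) 1 → y ∈ Set.Icc (0 : ℝ) 1 →
      |angleAt x y P P'| ≤
        c * (M : ℝ) * (|(b : ℝ) - (q : ℝ) * y| + |(q : ℝ) * x - (a : ℝ)|) / (Q : ℝ) ^ 2 := by

  refine ⟨32, by norm_num, ?_⟩
  intro q Q M a b hq hQ hQ12 hM hMQ ha1 haq hb1 hbq _hgcd A B hN hBA P P' hP hP' hne x y hx hy
  obtain ⟨hA1, hA2q, hB1, hB2q, hAB, hdvdq⟩ := hN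
  obtain ⟨u, m, hu0, huA, hdvd, hm1, hm2, hPe⟩ := hP
  obtain ⟨u', m', hu0', huA', hdvd', hm1', hm2', hPe'⟩ := hP'
  have hA0 : (0:ℤ) < A := hA1
  -- u = u'
  have huu : u' = u := by
    have h : A ∣ (u - u') * B := by
      have h0 : A ∣ (B * u + Cint a b q A B) - (B * u' + Cint a b q A B) := dvd_sub hdvd hdvd'
      have : (B * u + Cint a b q A B) - (B * u' + Cint a b q A B) = (u - u') * B := by ring
      rwa [this] at h0
    have h2 : A ∣ (u - u') := Int.dvd_of_dvd_mul_left_of_gcd_one h hAB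
    have h3 : |u - u'| < A := by rw [abs_lt]; omega
    have := Int.eq_zero_of_abs_lt_dvd h2 h3
    omega
  subst huu
  set C := Cint a b q A B with hC
  set v := (B * u' + C) / A with hv
  have hAv : A * v = B * u' + C := Int.mul_ediv_cancel' hdvd
  -- q * C = b*A - a*B
  have hqC : (q:ℤ) * C = (b:ℤ) * A - (a:ℤ) * B := by
    rw [hC, Cint]
    refine Int.mul_ediv_cancel' ?_
    have : (b:ℤ) * A - (a:ℤ) * B = A * b - B * a := by ring
    rwa [this]
  -- integer casts and arithmetic facts
  have hq1 : (1:ℤ) ≤ (q:ℤ) := by exact_mod_cast hq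
  have hQ12' : 12*(q:ℤ) + 12 ≤ (Q:ℤ) := by exact_mod_cast hQ12
  have hM4q : (M:ℤ) * (4 * q) ≤ (Q:ℤ) := by
    have : M * (4 * q) ≤ Q := (Nat.le_div_iff_mul_le (by positivity)).mp hMQ
    exact_mod_cast this
  have hMA2 : 2 * ((M:ℤ) * A) ≤ (Q:ℤ) := by nlinarith
  have hQAA : (Q:ℤ) / A * A ≥ (Q:ℤ) - A + 1 := by
    have e1 := Int.mul_ediv_add_emod (Q:ℤ) A
    have e2 : (Q:ℤ) % A < A := Int.emod_lt_of_pos _ hA0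
    have e3 : (0:ℤ) ≤ (Q:ℤ) % A := Int.emod_nonneg _ (ne_of_gt hA0)
    have e4 : A * ((Q:ℤ)/A) = (Q:ℤ)/A * A := mul_comm _ _
    linarith
  have keymA : ∀ n : ℤ, (Q : ℤ) / A - (M : ℤ) ≤ n → 2*(Q:ℤ) + 18 ≤ 6*(n*A) := by
    intro n hn
    have h1 : ((Q:ℤ)/A - M) * A ≤ n * A := mul_le_mul_of_nonneg_right hn (le_of_lt hA0)
    have h2 : ((Q:ℤ)/A - M) * A = (Q:ℤ)/A * A - M * A := by ring
    linarith
  have hCge : -(2*(q:ℤ)) ≤ C := by nlinarith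
  have keyv : ∀ n : ℤ, (Q : ℤ) / A - (M : ℤ) ≤ n → 1 ≤ v + n * B := by
    intro n hn
    have h1 := keymA n hn
    have h2 : A * (v + n * B) = B * u' + C + n * B * A := by rw [mul_add, hAv]; ring
    have hnA : 0 ≤ n * A := by linarith
    have h3 : n * A ≤ n * B * A := by nlinarith
    by_contra hcon
    push_neg at hcon
    have : v + n * B ≤ 0 := by omega
    nlinarith
  -- real facts
  have hQr : (0:ℝ) < (Q:ℝ) := by exact_mod_cast hQ
  have hQ12r : 12*(q:ℝ) + 12 ≤ (Q:ℝ) := by exact_mod_cast hQ12'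
  have keymAr : ∀ n : ℤ, (Q : ℤ) / A - (M : ℤ) ≤ n → 2*(Q:ℝ) + 18 ≤ 6*((n:ℝ)*(A:ℝ)) := by
    intro n hn; exact_mod_cast keymA n hn
  have keyvr : ∀ n : ℤ, (Q : ℤ) / A - (M : ℤ) ≤ n → (1:ℝ) ≤ (v:ℝ) + (n:ℝ) * (B:ℝ) := by
    intro n hn; exact_mod_cast keyv n hn
  obtain ⟨hx0, hx1⟩ := hx
  obtain ⟨hy0, hy1⟩ := hy
  have hu0r : (0:ℝ) ≤ (u':ℝ) := by exact_mod_cast hu0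
  -- the four coordinates
  have hp1 : (Q:ℝ)/4 ≤ (u':ℝ) + (m:ℝ)*(A:ℝ) - x := by have := keymAr m hm1; linarith
  have hr1 : (Q:ℝ)/4 ≤ (u':ℝ) + (m':ℝ)*(A:ℝ) - x := by have := keymAr m' hm1'; linarith
  have hp2 : (0:ℝ) ≤ (v:ℝ) + (m:ℝ)*(B:ℝ) - y := by have := keyvr m hm1; linarith
  have hr2 : (0:ℝ) ≤ (v:ℝ) + (m':ℝ)*(B:ℝ) - y := by have := keyvr m' hm1'; linarith
  -- rewrite the angle
  have hang : angleAt x y P P' = InnerProductGeometry.angle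
      (toPt ((u':ℝ) + (m:ℝ)*(A:ℝ) - x) ((v:ℝ) + (m:ℝ)*(B:ℝ) - y))
      (toPt ((u':ℝ) + (m':ℝ)*(A:ℝ) - x) ((v:ℝ) + (m':ℝ)*(B:ℝ) - y)) := by
    rw [hPe, hPe']
    unfold angleAt EuclideanGeometry.angle
    rw [vsub_eq_sub, vsub_eq_sub, toPt_sub, toPt_sub]
    push_cast
    ring_nf
  -- apply the key lemma
  have hL : (0:ℝ) < (Q:ℝ)/4 := by positivity
  have hkey := key _ _ _ _ _ hL hp1 hp2 hr1 hr2
  rw [← hang] at hkey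
  -- bound the cross product
  have hAvr : (A:ℝ) * (v:ℝ) = (B:ℝ)*(u':ℝ) + (C:ℝ) := by exact_mod_cast hAv
  have hqCr : (q:ℝ) * (C:ℝ) = (b:ℝ)*(A:ℝ) - (a:ℝ)*(B:ℝ) := by exact_mod_cast hqC
  have hcrosseq : ((u':ℝ) + (m:ℝ)*(A:ℝ) - x) * ((v:ℝ) + (m':ℝ)*(B:ℝ) - y)
      - ((v:ℝ) + (m:ℝ)*(B:ℝ) - y) * ((u':ℝ) + (m':ℝ)*(A:ℝ) - x)
      = ((m':ℝ) - (m:ℝ)) * ((A:ℝ)*y - (B:ℝ)*x - (C:ℝ)) := by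
    linear_combination ((m:ℝ) - (m':ℝ)) * hAvr
  have hmm : |(m':ℝ) - (m:ℝ)| ≤ (M:ℝ) := by
    have : |m' - m| ≤ (M:ℤ) := by rw [abs_le]; constructor <;> linarith
    calc |(m':ℝ) - (m:ℝ)| = ((|m' - m| : ℤ) : ℝ) := by push_cast [Int.cast_abs]; ring_nf
      _ ≤ (M:ℝ) := by exact_mod_cast this
  have hAr : (0:ℝ) < (A:ℝ) := by exact_mod_cast hA0
  have hBr : (0:ℝ) < (B:ℝ) := by exact_mod_cast hB1
  have hA2qr : (A:ℝ) ≤ 2*(q:ℝ) := by exact_mod_cast hA2q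
  have hB2qr : (B:ℝ) ≤ 2*(q:ℝ) := by exact_mod_cast hB2q
  have hqr : (0:ℝ) < (q:ℝ) := by exact_mod_cast hq
  set K := |(b : ℝ) - (q : ℝ) * y| + |(q : ℝ) * x - (a : ℝ)| with hK
  have hcrbd : |(A:ℝ)*y - (B:ℝ)*x - (C:ℝ)| ≤ 2 * K := by
    have hid : (q:ℝ) * ((A:ℝ)*y - (B:ℝ)*x - (C:ℝ))
        = (A:ℝ)*((q:ℝ)*y - (b:ℝ)) + (B:ℝ)*((a:ℝ) - (q:ℝ)*x) := by
      linear_combination -hqCr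
    have h1 : |(A:ℝ)*((q:ℝ)*y - (b:ℝ)) + (B:ℝ)*((a:ℝ) - (q:ℝ)*x)|
        ≤ (A:ℝ)*|(q:ℝ)*y - (b:ℝ)| + (B:ℝ)*|(a:ℝ) - (q:ℝ)*x| := by
      calc _ ≤ |(A:ℝ)*((q:ℝ)*y - (b:ℝ))| + |(B:ℝ)*((a:ℝ) - (q:ℝ)*x)| := abs_add_le _ _
        _ = (A:ℝ)*|(q:ℝ)*y - (b:ℝ)| + (B:ℝ)*|(a:ℝ) - (q:ℝ)*x| := by
          rw [abs_mul, abs_mul, abs_of_pos hAr, abs_of_pos hBr]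
    have h2 : (A:ℝ)*|(q:ℝ)*y - (b:ℝ)| + (B:ℝ)*|(a:ℝ) - (q:ℝ)*x| ≤ 2*(q:ℝ)*(2*K) / 2 := by
      rw [hK, abs_sub_comm ((q:ℝ)*y) (b:ℝ), abs_sub_comm ((a:ℝ)) ((q:ℝ)*x)]
      have := abs_nonneg ((b:ℝ) - (q:ℝ)*y)
      have := abs_nonneg ((q:ℝ)*x - (a:ℝ))
      nlinarith
    have h3 : (q:ℝ) * |(A:ℝ)*y - (B:ℝ)*x - (C:ℝ)| ≤ (q:ℝ) * (2*K) := by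
      rw [show (q:ℝ) * |(A:ℝ)*y - (B:ℝ)*x - (C:ℝ)| = |(q:ℝ) * ((A:ℝ)*y - (B:ℝ)*x - (C:ℝ))| by
        rw [abs_mul, abs_of_pos hqr], hid]
      calc _ ≤ (A:ℝ)*|(q:ℝ)*y - (b:ℝ)| + (B:ℝ)*|(a:ℝ) - (q:ℝ)*x| := h1
        _ ≤ 2*(q:ℝ)*(2*K) / 2 := h2
        _ = (q:ℝ)*(2*K) := by ring
    exact le_of_mul_le_mul_left h3 hqr
  -- conclude
  have hKnn : 0 ≤ K := by positivity
  have hcross_total : |((u':ℝ) + (m:ℝ)*(A:ℝ) - x) * ((v:ℝ) + (m':ℝ)*(B:ℝ) - y)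
      - ((v:ℝ) + (m:ℝ)*(B:ℝ) - y) * ((u':ℝ) + (m':ℝ)*(A:ℝ) - x)| ≤ (M:ℝ) * (2*K) := by
    rw [hcrosseq, abs_mul]
    have hMr : (0:ℝ) ≤ (M:ℝ) := by positivity
    exact mul_le_mul hmm hcrbd (abs_nonneg _) hMr
  have hfin : angleAt x y P P' ≤ (M:ℝ) * (2*K) / ((Q:ℝ)/4)^2 := by
    calc angleAt x y P P' ≤ _ := hkey
      _ ≤ (M:ℝ) * (2*K) / ((Q:ℝ)/4)^2 := by gcongr
  have hnn : 0 ≤ angleAt x y P P' := EuclideanGeometry.angle_nonneg _ _ _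
  rw [abs_of_nonneg hnn]
  calc angleAt x y P P' ≤ (M:ℝ) * (2*K) / ((Q:ℝ)/4)^2 := hfin
    _ = 32 * (M:ℝ) * K / (Q:ℝ)^2 := by field_simp; ring
end
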